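/- arXiv:1703.01157 — 9 statements merged into one kernel-verified Lean document; each statement's English description precedes it below -/
import Mathlib

section
/- Let n ≥ 1, let Ω ⊂ ℝⁿ be a bounded open set, let φ : ℝⁿ → ℝ be a nonnegative Lipschitz function with compact support contained in Ω, and let γ > 0. Then there exists u* ∈ K_∞ such that Lip(u*) ≤ Lip(v) for every v ∈ K_∞; that is, the problem of minimizing the Lipschitz constant over K_∞ admits a minimizer. -/
open MeasureTheory

lemma aux_lip_sInf {α : Type*} [PseudoMetricSpace α] {f : α → ℝ} {L0 : NNReal}
    (h : LipschitzWith L0 f) :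
    LipschitzWith (sInf {L : NNReal | LipschitzWith L f}) f := by
  have hne : {L : NNReal | LipschitzWith L f}.Nonempty := ⟨L0, h⟩
  apply LipschitzWith.of_dist_le_mul
  intro x y
  rcases eq_or_lt_of_le (dist_nonneg : (0:ℝ) ≤ dist x y) with hd | hd
  · have := h.dist_le_mul x y
    rw [← hd] at this ⊢
    simpa using this
  · have key : ∀ L ∈ {L : NNReal | LipschitzWith L f}, dist (f x) (f y) / dist x y ≤ (L : ℝ) := by
      intro L hL
      rw [div_le_iff₀ hd]
      exact hL.dist_le_mul x y
    set r : NNReal := ⟨dist (f x) (f y) / dist x y, by positivity⟩ with hr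
    have hrle : r ≤ sInf {L : NNReal | LipschitzWith L f} := by
      apply le_csInf hne
      intro L hL
      exact_mod_cast key L hL
    have : dist (f x) (f y) = (r : ℝ) * dist x y := by
      rw [hr]
      exact (div_mul_cancel₀ _ hd.ne').symm
    rw [this]
    exact mul_le_mul_of_nonneg_right (by exact_mod_cast hrle) hd.le

lemma aux_lip_ciSup {α ι : Type*} [PseudoMetricSpace α] [Nonempty ι] {f : ι → α → ℝ} {c : NNReal}
    (hf : ∀ i, LipschitzWith c (f i)) (hb : ∀ x, BddAbove (Set.range fun i => f i x)) :
    LipschitzWith c (fun x => ⨆ i, f i x) := by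
  apply LipschitzWith.of_dist_le_mul
  intro x y
  have key : ∀ u v : α, (⨆ i, f i u) - (⨆ i, f i v) ≤ (c : ℝ) * dist u v := by
    intro u v
    rw [sub_le_iff_le_add]
    apply ciSup_le
    intro i
    have h1 : dist (f i u) (f i v) ≤ (c : ℝ) * dist u v := (hf i).dist_le_mul u v
    rw [Real.dist_eq] at h1
    have h2 := abs_le.1 h1
    have h3 : f i v ≤ ⨆ j, f j v := le_ciSup (hb v) i
    linarith [h2.2]
  rw [Real.dist_eq, abs_sub_le_iff]
  exact ⟨key x y, by rw [dist_comm]; exact key y x⟩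

/-- Existence of a minimizer of the Lipschitz constant over
`K_∞ = {u Lipschitz | u ≥ φ, |{u>0} \ Ω| ≤ γ}`. -/
theorem exists_lipschitz_minimizer
    (n : ℕ) (hn : 1 ≤ n)
    (Ω : Set (EuclideanSpace ℝ (Fin n))) (hΩopen : IsOpen Ω)
    (hΩbdd : Bornology.IsBounded Ω)
    (φ : EuclideanSpace ℝ (Fin n) → ℝ) (Lφ : NNReal) (hφlip : LipschitzWith Lφ φ)
    (hφ0 : ∀ x, 0 ≤ φ x) (hφsupp : HasCompactSupport φ) (hφΩ : tsupport φ ⊆ Ω)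
    (γ : ℝ) (hγ : 0 < γ) :
    ∃ u ∈ {w : EuclideanSpace ℝ (Fin n) → ℝ |
        (∃ L : NNReal, LipschitzWith L w) ∧ (∀ x, φ x ≤ w x) ∧
        volume ({x | 0 < w x} \ Ω) ≤ ENNReal.ofReal γ},
      ∀ v ∈ {w : EuclideanSpace ℝ (Fin n) → ℝ |
        (∃ L : NNReal, LipschitzWith L w) ∧ (∀ x, φ x ≤ w x) ∧
        volume ({x | 0 < w x} \ Ω) ≤ ENNReal.ofReal γ},
      sInf {L : NNReal | LipschitzWith L u} ≤ sInf {L : NNReal | LipschitzWith L v} := by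
  classical
  set Kset : Set (EuclideanSpace ℝ (Fin n) → ℝ) := {w : EuclideanSpace ℝ (Fin n) → ℝ |
      (∃ L : NNReal, LipschitzWith L w) ∧ (∀ x, φ x ≤ w x) ∧
      volume ({x | 0 < w x} \ Ω) ≤ ENNReal.ofReal γ} with hKset
  by_cases hzero : ∀ x, φ x = 0
  · refine ⟨fun _ => (0:ℝ), ⟨⟨0, LipschitzWith.const _⟩, fun x => by simp [hzero x], by simp⟩, ?_⟩
    intro v _
    have h0 : sInf {L : NNReal | LipschitzWith L (fun _ : EuclideanSpace ℝ (Fin n) => (0:ℝ))} ≤ 0 :=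
      csInf_le (OrderBot.bddBelow _) (LipschitzWith.const _)
    exact h0.trans zero_le
  · push_neg at hzero
    obtain ⟨x₀, hx₀⟩ := hzero
    have hx₀K : x₀ ∈ tsupport φ := subset_tsupport φ hx₀
    haveI : Nonempty ↥(tsupport φ) := ⟨⟨x₀, hx₀K⟩⟩
    -- φ belongs to Kset
    have hφK : φ ∈ Kset := by
      refine ⟨⟨Lφ, hφlip⟩, fun x => le_refl _, ?_⟩
      have hsub : {x : EuclideanSpace ℝ (Fin n) | 0 < φ x} \ Ω = ∅ := by
        rw [Set.diff_eq_empty]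
        intro x hx
        exact hφΩ (subset_tsupport φ (ne_of_gt hx))
      rw [hsub]
      simp
    -- the infimum value M
    set S : Set NNReal := (fun v => sInf {L : NNReal | LipschitzWith L v}) '' Kset with hS
    have hSne : S.Nonempty := ⟨_, φ, hφK, rfl⟩
    set M : NNReal := sInf S with hM
    -- bound R on the support
    obtain ⟨r, hr⟩ := (hφsupp.isBounded).subset_closedBall 0
    set R : ℝ := max r 0 with hRdef
    have hR : ∀ y ∈ tsupport φ, ‖y‖ ≤ R := by
      intro y hy
      have := hr hy
      rw [Metric.mem_closedBall, dist_zero_right] at this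
      exact this.trans (le_max_left _ _)
    have hR0 : 0 ≤ R := le_max_right _ _
    -- bound C on φ
    obtain ⟨z, hzK, hzmax⟩ := hφsupp.exists_isMaxOn ⟨x₀, hx₀K⟩ hφlip.continuous.continuousOn
    set C : ℝ := φ z with hCdef
    have hC : ∀ y, φ y ≤ C := by
      intro y
      by_cases hy : y ∈ tsupport φ
      · exact hzmax hy
      · rw [image_eq_zero_of_notMem_tsupport hy]
        exact hφ0 z
    -- the family of candidate minimizers
    set w : NNReal → EuclideanSpace ℝ (Fin n) → ℝ :=
      fun c x => max 0 (⨆ y : tsupport φ, (φ y - (c:ℝ) * ‖x - (y:EuclideanSpace ℝ (Fin n))‖)) with hw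
    have hbdd : ∀ (c : NNReal) (x : EuclideanSpace ℝ (Fin n)),
        BddAbove (Set.range fun y : tsupport φ => φ y - (c:ℝ) * ‖x - (y:EuclideanSpace ℝ (Fin n))‖) := by
      intro c x
      refine ⟨C, ?_⟩
      rintro _ ⟨y, rfl⟩
      show φ (y:EuclideanSpace ℝ (Fin n)) - (c:ℝ) * ‖x - (y:EuclideanSpace ℝ (Fin n))‖ ≤ C
      have : (0:ℝ) ≤ (c:ℝ) * ‖x - (y:EuclideanSpace ℝ (Fin n))‖ := by positivity
      linarith [hC (y:EuclideanSpace ℝ (Fin n))]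
    -- each w c is c-Lipschitz
    have hwlip : ∀ c : NNReal, LipschitzWith c (w c) := by
      intro c
      have h1 : LipschitzWith c (fun _ : EuclideanSpace ℝ (Fin n) => (0:ℝ)) :=
        (LipschitzWith.const _).weaken zero_le
      have h2 : LipschitzWith c
          (fun x : EuclideanSpace ℝ (Fin n) => ⨆ y : tsupport φ, (φ y - (c:ℝ) * ‖x - (y:EuclideanSpace ℝ (Fin n))‖)) := by
        apply aux_lip_ciSup _ (hbdd c)
        intro y
        apply LipschitzWith.of_dist_le_mul
        intro a b
        rw [Real.dist_eq]
        have hab : |‖a - (y:EuclideanSpace ℝ (Fin n))‖ - ‖b - (y:EuclideanSpace ℝ (Fin n))‖| ≤ ‖a - b‖ := by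
          have := abs_norm_sub_norm_le (a - (y:EuclideanSpace ℝ (Fin n))) (b - (y:EuclideanSpace ℝ (Fin n)))
          simpa using this
        have h0 : (φ (y:EuclideanSpace ℝ (Fin n)) - (c:ℝ) * ‖a - (y:EuclideanSpace ℝ (Fin n))‖) - (φ (y:EuclideanSpace ℝ (Fin n)) - (c:ℝ) * ‖b - (y:EuclideanSpace ℝ (Fin n))‖)
            = (c:ℝ) * (‖b - (y:EuclideanSpace ℝ (Fin n))‖ - ‖a - (y:EuclideanSpace ℝ (Fin n))‖) := by ring
        rw [h0, abs_mul, abs_of_nonneg (by positivity : (0:ℝ) ≤ (c:ℝ)), dist_eq_norm]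
        have : |‖b - (y:EuclideanSpace ℝ (Fin n))‖ - ‖a - (y:EuclideanSpace ℝ (Fin n))‖| ≤ ‖a - b‖ := by
          rw [abs_sub_comm]; exact hab
        exact mul_le_mul_of_nonneg_left this (by positivity)
      simpa using h1.max h2
    -- monotonicity in c : larger constant gives smaller function
    have hmono : ∀ c c' : NNReal, c ≤ c' → ∀ x, w c' x ≤ w c x := by
      intro c c' hcc x
      apply max_le_max le_rfl
      apply ciSup_mono (hbdd c x)
      intro y
      have : (c:ℝ) * ‖x - (y:EuclideanSpace ℝ (Fin n))‖ ≤ (c':ℝ) * ‖x - (y:EuclideanSpace ℝ (Fin n))‖ :=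
        mul_le_mul_of_nonneg_right (by exact_mod_cast hcc) (norm_nonneg _)
      linarith
    -- w c ≥ φ
    have hge : ∀ (c : NNReal) (x : EuclideanSpace ℝ (Fin n)), φ x ≤ w c x := by
      intro c x
      by_cases hx : x ∈ tsupport φ
      · have h1 : φ x - (c:ℝ) * ‖x - x‖ ≤ ⨆ y : tsupport φ, (φ y - (c:ℝ) * ‖x - (y:EuclideanSpace ℝ (Fin n))‖) :=
          le_ciSup (hbdd c x) ⟨x, hx⟩
        simp only [sub_self, norm_zero, mul_zero, sub_zero] at h1
        exact h1.trans (le_max_right _ _)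
      · rw [image_eq_zero_of_notMem_tsupport hx]
        exact le_max_left _ _
    -- w c ≤ v whenever v ∈ Kset is c-Lipschitz
    have hle : ∀ (c : NNReal) (v : EuclideanSpace ℝ (Fin n) → ℝ), (∀ x, φ x ≤ v x) → LipschitzWith c v →
        ∀ x, w c x ≤ v x := by
      intro c v hvφ hvlip x
      apply max_le ((hφ0 x).trans (hvφ x))
      apply ciSup_le
      intro y
      have h1 := hvlip.dist_le_mul x (y:EuclideanSpace ℝ (Fin n))
      rw [Real.dist_eq, dist_eq_norm] at h1
      have h2 := abs_le.1 h1
      have h3 := hvφ (y:EuclideanSpace ℝ (Fin n))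
      linarith [h2.1]
    -- pick near-minimizers
    have hv : ∀ k : ℕ, ∃ v, v ∈ Kset ∧ LipschitzWith (M + ((k:NNReal)+1)⁻¹) v := by
      intro k
      have hεpos : (0:NNReal) < ((k:NNReal)+1)⁻¹ := by positivity
      have hlt : sInf S < M + ((k:NNReal)+1)⁻¹ := lt_add_of_pos_right _ hεpos
      obtain ⟨a, ⟨v, hvK, rfl⟩, ha⟩ := exists_lt_of_csInf_lt hSne hlt
      obtain ⟨L0, hL0⟩ := hvK.1
      exact ⟨v, hvK, (aux_lip_sInf hL0).weaken ha.le⟩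
    choose vk hvkK hvklip using hv
    -- the union identity
    set A : ℕ → Set (EuclideanSpace ℝ (Fin n)) := fun k => {x | 0 < w (M + ((k:NNReal)+1)⁻¹) x} \ Ω with hA
    have hεmono : ∀ k k' : ℕ, k ≤ k' → ((k':NNReal)+1)⁻¹ ≤ ((k:NNReal)+1)⁻¹ := by
      intro k k' hk
      gcongr
    have hAmono : Monotone A := by
      intro k k' hk
      apply Set.diff_subset_diff_left
      intro x hx
      exact lt_of_lt_of_le hx (hmono _ _ (add_le_add_right (hεmono k k' hk) M) x)
    have hcup : {x : EuclideanSpace ℝ (Fin n) | 0 < w M x} \ Ω = ⋃ k, A k := by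
      apply Set.Subset.antisymm
      · rintro x ⟨hx1, hx2⟩
        have hsup : 0 < ⨆ y : tsupport φ, (φ y - (M:ℝ) * ‖x - (y:EuclideanSpace ℝ (Fin n))‖) := by
          by_contra h
          push_neg at h
          have : w M x ≤ 0 := max_le le_rfl h
          exact absurd hx1 (not_lt.2 this)
        set s₀ : ℝ := ⨆ y : tsupport φ, (φ y - (M:ℝ) * ‖x - (y:EuclideanSpace ℝ (Fin n))‖) with hs₀
        obtain ⟨k, hk⟩ := exists_nat_gt ((‖x‖ + R) / s₀)
        refine Set.mem_iUnion.2 ⟨k, ⟨?_, hx2⟩⟩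
        -- estimate: sup at M+ε ≥ s₀ - ε (‖x‖+R)
        set ε : NNReal := ((k:NNReal)+1)⁻¹ with hε
        have hεval : (ε:ℝ) = ((k:ℝ)+1)⁻¹ := by
          rw [hε]; push_cast; ring_nf
        have hεpos : (0:ℝ) < (ε:ℝ) := by rw [hεval]; positivity
        have key : s₀ ≤ (⨆ y : tsupport φ, (φ y - ((M + ε : NNReal):ℝ) * ‖x - (y:EuclideanSpace ℝ (Fin n))‖))
            + (ε:ℝ) * (‖x‖ + R) := by
          apply ciSup_le
          intro y
          have hy : ‖x - (y:EuclideanSpace ℝ (Fin n))‖ ≤ ‖x‖ + R :=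
            (norm_sub_le _ _).trans (add_le_add_right (hR _ y.2) _)
          have h1 : φ (y:EuclideanSpace ℝ (Fin n)) - ((M + ε : NNReal):ℝ) * ‖x - (y:EuclideanSpace ℝ (Fin n))‖
              ≤ ⨆ y : tsupport φ, (φ y - ((M + ε : NNReal):ℝ) * ‖x - (y:EuclideanSpace ℝ (Fin n))‖) :=
            le_ciSup (hbdd _ x) y
          have h3 : (ε:ℝ) * ‖x - (y:EuclideanSpace ℝ (Fin n))‖ ≤ (ε:ℝ) * (‖x‖ + R) :=
            mul_le_mul_of_nonneg_left hy hεpos.le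
          push_cast at h1 ⊢
          linarith [h1, h3]
        have hklt : (ε:ℝ) * (‖x‖ + R) < s₀ := by
          rw [hεval]
          rw [div_lt_iff₀ hsup] at hk
          have hk1 : ‖x‖ + R < ((k:ℝ)+1) * s₀ := by nlinarith
          rw [inv_mul_lt_iff₀ (by positivity : (0:ℝ) < (k:ℝ)+1)]
          exact hk1
        have : 0 < ⨆ y : tsupport φ, (φ y - ((M + ε : NNReal):ℝ) * ‖x - (y:EuclideanSpace ℝ (Fin n))‖) := by
          linarith [key, hklt]
        exact lt_of_lt_of_le this (le_max_right _ _)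
      · apply Set.iUnion_subset
        intro k
        apply Set.diff_subset_diff_left
        intro x hx
        exact lt_of_lt_of_le hx (hmono _ _ (le_add_of_nonneg_right zero_le) x)
    -- measure bound for w M
    have hmeas : volume ({x : EuclideanSpace ℝ (Fin n) | 0 < w M x} \ Ω) ≤ ENNReal.ofReal γ := by
      rw [hcup, (hAmono.directed_le).measure_iUnion]
      apply iSup_le
      intro k
      have hsub : A k ⊆ {x : EuclideanSpace ℝ (Fin n) | 0 < vk k x} \ Ω := by
        apply Set.diff_subset_diff_left
        intro x hx
        exact lt_of_lt_of_le hx (hle _ (vk k) (hvkK k).2.1 (hvklip k) x)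
      exact (measure_mono hsub).trans (hvkK k).2.2
    refine ⟨w M, ⟨⟨M, hwlip M⟩, hge M, hmeas⟩, ?_⟩
    intro v hv'
    have h1 : sInf {L : NNReal | LipschitzWith L (w M)} ≤ M :=
      csInf_le (OrderBot.bddBelow _) (hwlip M)
    have h2 : M ≤ sInf {L : NNReal | LipschitzWith L v} :=
      csInf_le (OrderBot.bddBelow _) ⟨v, hv', rfl⟩
    exact h1.trans h2
end

section
/- Let u and (u_k)_{k∈ℕ} be continuous nonnegative functions on ℝⁿ with u_k → u uniformly on ℝⁿ, and let θ > 0. Assume that ∂{u>0} and every ∂{u_k>0} are nonempty, that u and every u_k have linear growth away from the free boundary with constant θ, and that u and every u_k are strongly non-degenerate with constant θ. Then the free boundaries converge in the Hausdorff sense: for every ε > 0 there exists N such that for all k ≥ N one has ∂{u_k>0} ⊆ Γ_ε(∂{u>0}) and ∂{u>0} ⊆ Γ_ε(∂{u_k>0}). -/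
open Metric MeasureTheory Filter

lemma aux_fb {E : Type*} [NormedAddCommGroup E] [NormedSpace ℝ E]
    (v w : E → ℝ) (hv : Continuous v) (hw : Continuous w)
    (hv0 : ∀ x, 0 ≤ v x) (hw0 : ∀ x, 0 ≤ w x)
    (θ ε : ℝ) (hθ : 0 < θ) (hε : 0 < ε)
    (hlin : ∀ x, 0 < v x → θ * infDist x (frontier {y | 0 < v y}) ≤ v x)
    (hnd : ∀ x₀ ∈ frontier {y | 0 < w y}, ∀ r > (0:ℝ), θ * r ≤ sSup (w '' closedBall x₀ r))
    (hclose : ∀ x, dist (v x) (w x) < θ * ε / 4) :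
    frontier {y | 0 < w y} ⊆ {x | infDist x (frontier {y | 0 < v y}) < ε} := by
  intro x₀ hx₀
  by_contra h
  simp only [Set.mem_setOf_eq, not_lt] at h
  have hopen : IsOpen {y | 0 < v y} := isOpen_lt continuous_const hv
  have hopenw : IsOpen {y | 0 < w y} := isOpen_lt continuous_const hw
  -- the ball of radius ε around x₀ misses the frontier of {v>0}
  have hdisj : ∀ x ∈ ball x₀ ε, x ∉ frontier {y | 0 < v y} := by
    intro x hx hxF
    have h1 : infDist x₀ (frontier {y | 0 < v y}) ≤ dist x₀ x :=
      infDist_le_dist_of_mem hxF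
    have h2 : dist x₀ x < ε := by rwa [dist_comm, ← mem_ball]
    linarith
  -- w x₀ = 0
  have hwx₀ : w x₀ = 0 := by
    rw [hopenw.frontier_eq] at hx₀
    have : ¬ 0 < w x₀ := hx₀.2
    linarith [hw0 x₀]
  -- the ball is contained in {v>0} or disjoint from its closure
  have hsub : ball x₀ ε ⊆ {y | 0 < v y} ∨ ball x₀ ε ⊆ (closure {y | 0 < v y})ᶜ := by
    have hcov : ball x₀ ε ⊆ {y | 0 < v y} ∪ (closure {y | 0 < v y})ᶜ := by
      intro x hx
      have := hdisj x hx
      rw [frontier, hopen.interior_eq] at this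
      by_cases hc : x ∈ closure {y | 0 < v y}
      · left; by_contra hm; exact this ⟨hc, hm⟩
      · right; exact hc
    exact (convex_ball x₀ ε).isPreconnected.subset_or_subset hopen
      isClosed_closure.isOpen_compl
      (disjoint_compl_right.mono_left subset_closure) hcov
  rcases hsub with hsub | hsub
  · -- x₀ ∈ {v>0}, linear growth gives v x₀ ≥ θε, but w x₀ = 0
    have hx₀v : 0 < v x₀ := hsub (mem_ball_self hε)
    have h1 : θ * ε ≤ v x₀ := by
      have := hlin x₀ hx₀v
      have h2 : θ * ε ≤ θ * infDist x₀ (frontier {y | 0 < v y}) := by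
        exact mul_le_mul_of_nonneg_left h hθ.le
      linarith
    have := hclose x₀
    rw [Real.dist_eq, hwx₀] at this
    rw [abs_of_nonneg (by linarith [hv0 x₀])] at this
    nlinarith
  · -- v = 0 near x₀, contradicting non-degeneracy of w
    have hv0' : ∀ y ∈ closedBall x₀ (ε / 2), v y = 0 := by
      intro y hy
      have hyb : y ∈ ball x₀ ε := by
        rw [mem_closedBall] at hy; rw [mem_ball]; linarith
      have : y ∉ closure {y | 0 < v y} := hsub hyb
      have : ¬ 0 < v y := fun hp => this (subset_closure hp)
      linarith [hv0 y]
    have hle : sSup (w '' closedBall x₀ (ε / 2)) ≤ θ * ε / 4 := by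
      apply Real.sSup_le
      · rintro a ⟨y, hy, rfl⟩
        have := hclose y
        rw [Real.dist_eq, hv0' y hy, abs_sub_comm, sub_zero,
          abs_of_nonneg (hw0 y)] at this
        linarith
      · positivity
    have := hnd x₀ hx₀ (ε / 2) (by positivity)
    nlinarith

/-- Hausdorff convergence of the free boundaries. -/
theorem free_boundaries_converge
    (n : ℕ) (u : EuclideanSpace ℝ (Fin n) → ℝ)
    (uk : ℕ → EuclideanSpace ℝ (Fin n) → ℝ)
    (hu : Continuous u) (huk : ∀ k, Continuous (uk k))
    (hu0 : ∀ x, 0 ≤ u x) (huk0 : ∀ k x, 0 ≤ uk k x)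
    (hconv : TendstoUniformly uk u atTop)
    (θ : ℝ) (hθ : 0 < θ)
    (hfb : (frontier {x | 0 < u x}).Nonempty)
    (hfbk : ∀ k, (frontier {x | 0 < uk k x}).Nonempty)
    (hlin : ∀ x, 0 < u x → θ * infDist x (frontier {y | 0 < u y}) ≤ u x)
    (hlink : ∀ k x, 0 < uk k x → θ * infDist x (frontier {y | 0 < uk k y}) ≤ uk k x)
    (hnd : ∀ x₀ ∈ frontier {y | 0 < u y}, ∀ r > (0 : ℝ),
      θ * r ≤ sSup (u '' closedBall x₀ r))
    (hndk : ∀ k, ∀ x₀ ∈ frontier {y | 0 < uk k y}, ∀ r > (0 : ℝ),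
      θ * r ≤ sSup (uk k '' closedBall x₀ r)) :
    ∀ ε > (0 : ℝ), ∃ N : ℕ, ∀ k ≥ N,
      frontier {y | 0 < uk k y} ⊆ {x | infDist x (frontier {y | 0 < u y}) < ε} ∧
      frontier {y | 0 < u y} ⊆ {x | infDist x (frontier {y | 0 < uk k y}) < ε} := by
  intro ε hε
  have hδ : 0 < θ * ε / 4 := by positivity
  obtain ⟨N, hN⟩ := (Metric.tendstoUniformly_iff.mp hconv (θ * ε / 4) hδ).exists_forall_of_atTop
  refine ⟨N, fun k hk => ?_⟩
  have hclose : ∀ x, dist (u x) (uk k x) < θ * ε / 4 := hN k hk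
  constructor
  · exact aux_fb u (uk k) hu (huk k) hu0 (huk0 k) θ ε hθ hε hlin (hndk k) hclose
  · exact aux_fb (uk k) u (huk k) hu (huk0 k) hu0 θ ε hθ hε (hlink k) hnd
      (fun x => by rw [dist_comm]; exact hclose x)
end

section
/- Let u and (u_k)_{k∈ℕ} be continuous nonnegative functions on ℝⁿ with u_k → u uniformly on ℝⁿ, and let θ > 0. Assume ∂{u>0} is nonempty, that u has linear growth away from the free boundary with constant θ, and that every u_k is strongly non-degenerate with constant θ. Then for every ε > 0 there exists N such that ∂{u_k>0} ⊆ Γ_ε(∂{u>0}) for all k ≥ N. -/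
open Metric MeasureTheory Filter

lemma aux_preconnected_frontier {X : Type*} [TopologicalSpace X] {s t : Set X}
    (hs : IsPreconnected s) (h1 : (s ∩ t).Nonempty) (h2 : (s \ t).Nonempty) :
    (s ∩ frontier t).Nonempty := by
  by_contra h
  rw [Set.not_nonempty_iff_eq_empty] at h
  have hdisj : ∀ x ∈ s, x ∉ frontier t := by
    intro x hx hxf
    exact absurd (Set.mem_inter hx hxf) (by simp [h])
  have hcov : s ⊆ interior t ∪ (closure t)ᶜ := by
    intro x hx
    by_cases hxc : x ∈ closure t
    · left
      by_contra hxi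
      exact hdisj x hx ⟨hxc, hxi⟩
    · right; exact hxc
  have hu : (s ∩ interior t).Nonempty := by
    obtain ⟨x, hxs, hxt⟩ := h1
    refine ⟨x, hxs, ?_⟩
    by_contra hxi
    exact hdisj x hxs ⟨subset_closure hxt, hxi⟩
  have hv : (s ∩ (closure t)ᶜ).Nonempty := by
    obtain ⟨x, hxs, hxt⟩ := h2
    refine ⟨x, hxs, ?_⟩
    intro hxc
    exact hdisj x hxs ⟨hxc, fun hxi => hxt (interior_subset hxi)⟩
  obtain ⟨x, hxs, hxi, hxc⟩ := hs (interior t) (closure t)ᶜ isOpen_interior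
    isClosed_closure.isOpen_compl hcov hu hv
  exact hxc (subset_closure (interior_subset hxi))

set_option maxHeartbeats 1000000 in
/-- one inclusion of the Hausdorff convergence of free boundaries. -/
theorem free_boundary_inclusion_one
    (n : ℕ) (u : EuclideanSpace ℝ (Fin n) → ℝ)
    (uk : ℕ → EuclideanSpace ℝ (Fin n) → ℝ)
    (hu : Continuous u) (huk : ∀ k, Continuous (uk k))
    (hu0 : ∀ x, 0 ≤ u x) (huk0 : ∀ k x, 0 ≤ uk k x)
    (hconv : TendstoUniformly uk u atTop)
    (θ : ℝ) (hθ : 0 < θ)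
    (hfb : (frontier {x | 0 < u x}).Nonempty)
    (hlin : ∀ x, 0 < u x → θ * infDist x (frontier {y | 0 < u y}) ≤ u x)
    (hndk : ∀ k, ∀ x₀ ∈ frontier {y | 0 < uk k y}, ∀ r > (0 : ℝ),
      θ * r ≤ sSup (uk k '' closedBall x₀ r)) :
    ∀ ε > (0 : ℝ), ∃ N : ℕ, ∀ k ≥ N,
      frontier {y | 0 < uk k y} ⊆ {x | infDist x (frontier {y | 0 < u y}) < ε} := by
  intro ε hε
  set F := frontier {y | 0 < u y} with hF
  have hδ : 0 < θ * ε / 4 := by positivity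
  obtain ⟨N, hN⟩ := (eventually_atTop).1 (Metric.tendstoUniformly_iff.1 hconv (θ * ε / 4) hδ)
  refine ⟨N, fun k hk x₀ hx₀ => ?_⟩
  have hclose : ∀ x, |uk k x - u x| < θ * ε / 4 := by
    intro x
    have := hN k hk x
    rw [Real.dist_eq] at this
    rwa [abs_sub_comm]
  by_contra hcon
  simp only [Set.mem_setOf_eq, not_lt] at hcon
  -- x₀ is on the frontier of the open set {uk k > 0}, so uk k x₀ = 0
  have hopen : IsOpen {y | 0 < uk k y} := isOpen_lt continuous_const (huk k)
  have hukx₀ : uk k x₀ = 0 := by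
    have hnot : x₀ ∉ {y | 0 < uk k y} := by
      intro hmem
      exact (hopen.frontier_eq ▸ hx₀).2 hmem
    simp only [Set.mem_setOf_eq, not_lt] at hnot
    exact le_antisymm hnot (huk0 k x₀)
  by_cases hux₀ : 0 < u x₀
  · -- then u x₀ ≥ θ ε, so uk k x₀ > 0: contradiction
    have h1 : θ * ε ≤ u x₀ := le_trans (by nlinarith) (hlin x₀ hux₀)
    have := hclose x₀
    rw [hukx₀] at this
    rw [abs_lt] at this
    nlinarith
  · -- u x₀ = 0; use non-degeneracy of uk k with radius ε/2
    have hr : (0:ℝ) < ε / 2 := by linarith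
    have hsup := hndk k x₀ hx₀ (ε / 2) hr
    -- the sup is attained
    have hcpt : IsCompact (closedBall x₀ (ε / 2)) := isCompact_closedBall _ _
    obtain ⟨y, hy, hymax⟩ := hcpt.exists_isMaxOn ⟨x₀, mem_closedBall_self hr.le⟩
      ((huk k).continuousOn)
    have hsub : sSup (uk k '' closedBall x₀ (ε / 2)) ≤ uk k y := by
      apply csSup_le (Set.Nonempty.image _ ⟨x₀, mem_closedBall_self hr.le⟩)
      rintro b ⟨z, hz, rfl⟩
      exact hymax hz
    have huky : θ * (ε / 2) ≤ uk k y := le_trans hsup hsub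
    have huy : 0 < u y := by
      have := hclose y
      rw [abs_lt] at this
      nlinarith
    -- segment from x₀ to y crosses the frontier F
    have hx₀not : x₀ ∉ {y | 0 < u y} := hux₀
    obtain ⟨z, hzseg, hzF⟩ := aux_preconnected_frontier
      (X := EuclideanSpace ℝ (Fin n)) (s := segment ℝ x₀ y) (t := {y | 0 < u y})
      (convex_segment x₀ y).isPreconnected
      ⟨y, right_mem_segment ℝ x₀ y, huy⟩
      ⟨x₀, left_mem_segment ℝ x₀ y, hx₀not⟩
    -- z is within ε/2 of x₀, contradicting infDist x₀ F ≥ ε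
    have hsum : dist x₀ z + dist z y = dist x₀ y := dist_add_dist_of_mem_segment hzseg
    have hxy : dist x₀ y ≤ ε / 2 := by rw [dist_comm]; exact mem_closedBall.1 hy
    have h1 : infDist x₀ F ≤ dist x₀ z := infDist_le_dist_of_mem hzF
    have := dist_nonneg (x := z) (y := y)
    linarith
end

section
/- Let u and (u_k)_{k∈ℕ} be continuous nonnegative functions on ℝⁿ with u_k → u uniformly on ℝⁿ, and let θ > 0. Assume every ∂{u_k>0} is nonempty, that every u_k has linear growth away from the free boundary with constant θ, and that u is strongly non-degenerate with constant θ. Then for every ε > 0 there exists N such that ∂{u>0} ⊆ Γ_ε(∂{u_k>0}) for all k ≥ N. -/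
open Metric MeasureTheory Filter

/-- If `t` is open, `a ∉ t`, `b ∈ t`, then the segment from `a` to `b` meets the frontier. -/
lemma segment_meets_frontier {E : Type*} [NormedAddCommGroup E] [NormedSpace ℝ E]
    {t : Set E} (ht : IsOpen t) {a b : E} (ha : a ∉ t) (hb : b ∈ t) :
    ∃ w ∈ segment ℝ a b, w ∈ frontier t := by
  by_contra h
  push_neg at h
  have hdisj : Disjoint (frontier t) (segment ℝ a b) := by
    rw [Set.disjoint_right]
    exact fun w hw hf => h w hw hf
  have hclopen := isClopen_preimage_val ht hdisj
  haveI := Subtype.preconnectedSpace (convex_segment (𝕜 := ℝ) a b).isPreconnected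
  rcases isClopen_iff.mp hclopen with he | huniv
  · have hmem : (⟨b, right_mem_segment ℝ a b⟩ : segment ℝ a b) ∈
        (Subtype.val ⁻¹' t : Set (segment ℝ a b)) := hb
    rw [he] at hmem
    exact hmem
  · have hmem : (⟨a, left_mem_segment ℝ a b⟩ : segment ℝ a b) ∈
        (Subtype.val ⁻¹' t : Set (segment ℝ a b)) := by rw [huniv]; trivial
    exact ha hmem

/-- the other inclusion of the Hausdorff convergence of free boundaries. -/
theorem free_boundary_inclusion_two
    (n : ℕ) (u : EuclideanSpace ℝ (Fin n) → ℝ)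
    (uk : ℕ → EuclideanSpace ℝ (Fin n) → ℝ)
    (hu : Continuous u) (huk : ∀ k, Continuous (uk k))
    (hu0 : ∀ x, 0 ≤ u x) (huk0 : ∀ k x, 0 ≤ uk k x)
    (hconv : TendstoUniformly uk u atTop)
    (θ : ℝ) (hθ : 0 < θ)
    (hfbk : ∀ k, (frontier {x | 0 < uk k x}).Nonempty)
    (hlink : ∀ k x, 0 < uk k x → θ * infDist x (frontier {y | 0 < uk k y}) ≤ uk k x)
    (hnd : ∀ x₀ ∈ frontier {y | 0 < u y}, ∀ r > (0 : ℝ),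
      θ * r ≤ sSup (u '' closedBall x₀ r)) :
    ∀ ε > (0 : ℝ), ∃ N : ℕ, ∀ k ≥ N,
      frontier {y | 0 < u y} ⊆ {x | infDist x (frontier {y | 0 < uk k y}) < ε} := by
  intro ε hε
  have hδ : (0:ℝ) < θ * ε / 8 := by positivity
  obtain ⟨N, hN⟩ := eventually_atTop.mp (Metric.tendstoUniformly_iff.mp hconv (θ * ε / 8) hδ)
  refine ⟨N, fun k hk x₀ hx₀ => ?_⟩
  have hclose : ∀ x, dist (u x) (uk k x) < θ * ε / 8 := hN k hk
  have hopen : IsOpen {y | 0 < u y} := isOpen_lt continuous_const hu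
  have hx₀notin : x₀ ∉ {y | 0 < u y} := fun h => hx₀.2 (by rwa [hopen.interior_eq])
  have hux₀ : u x₀ = 0 := le_antisymm (not_lt.mp hx₀notin) (hu0 x₀)
  simp only [Set.mem_setOf_eq]
  by_cases hpos : 0 < uk k x₀
  · have h1 := hlink k x₀ hpos
    have h2 : uk k x₀ < θ * ε / 8 := by
      have := hclose x₀
      rw [Real.dist_eq, hux₀] at this
      have := abs_lt.mp this
      linarith [this.1]
    have h3 : θ * infDist x₀ (frontier {y | 0 < uk k y}) < θ * ε / 8 := lt_of_le_of_lt h1 h2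
    nlinarith [infDist_nonneg (s := frontier {y | 0 < uk k y}) (x := x₀)]
  · have hsup := hnd x₀ hx₀ (ε / 2) (by linarith)
    have hlt : θ * ε / 4 < sSup (u '' closedBall x₀ (ε / 2)) :=
      lt_of_lt_of_le (by nlinarith) hsup
    obtain ⟨y, ⟨z, hz, rfl⟩, hy⟩ := exists_lt_of_lt_csSup
      ((nonempty_closedBall.mpr (by linarith)).image u) hlt
    have hzk : 0 < uk k z := by
      have := hclose z
      rw [Real.dist_eq] at this
      have := abs_lt.mp this
      linarith [this.2]
    have hkopen : IsOpen {y | 0 < uk k y} := isOpen_lt continuous_const (huk k)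
    obtain ⟨w, hwseg, hwf⟩ := segment_meets_frontier hkopen hpos hzk
    have hwball : w ∈ closedBall x₀ (ε / 2) :=
      (convex_closedBall x₀ (ε / 2)).segment_subset (mem_closedBall_self (by linarith)) hz hwseg
    have : infDist x₀ (frontier {y | 0 < uk k y}) ≤ dist x₀ w := infDist_le_dist_of_mem hwf
    rw [mem_closedBall, dist_comm] at hwball
    linarith
end

section
/- Let (p_k)_{k∈ℕ} be a sequence of reals with p_k > 2 and p_k → ∞, and let (u_k)_{k∈ℕ} be continuous functions on ℝⁿ, each a viscosity supersolution of the p_k-Laplace equation in the following sense: for every C² function ψ : ℝⁿ → ℝ and every point x at which u_k − ψ attains a local minimum and at which ∇ψ(x) ≠ 0, one has (p_k − 2)‖∇ψ(x)‖^{p_k−4} Δ_∞ψ(x) + ‖∇ψ(x)‖^{p_k−2} Δψ(x) ≤ 0. If u_k → u uniformly on ℝⁿ, then u is a viscosity supersolution of Δ_∞u = 0: for every C² function ψ : ℝⁿ → ℝ and every point x₀ at which u − ψ attains a local minimum, Δ_∞ψ(x₀) ≤ 0. -/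
open Filter

/-- The infinity-Laplacian `Δ_∞ψ(x) = ⟨D²ψ(x) ∇ψ(x), ∇ψ(x)⟩` of `ψ` at `x`,
where the Hessian is `D²ψ(x) = D(∇ψ)(x)`. -/
noncomputable def infLap (n : ℕ) (ψ : EuclideanSpace ℝ (Fin n) → ℝ)
    (x : EuclideanSpace ℝ (Fin n)) : ℝ :=
  inner ℝ (fderiv ℝ (gradient ψ) x (gradient ψ x)) (gradient ψ x)

/-- The Laplacian `Δψ(x)`, i.e. the trace of the Hessian `D²ψ(x)`. -/
noncomputable def lap (n : ℕ) (ψ : EuclideanSpace ℝ (Fin n) → ℝ)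
    (x : EuclideanSpace ℝ (Fin n)) : ℝ :=
  ∑ i : Fin n, inner ℝ (fderiv ℝ (gradient ψ) x (EuclideanSpace.single i (1 : ℝ)))
    (EuclideanSpace.single i (1 : ℝ))

section Aux
open InnerProductSpace Metric
variable {n : ℕ}
local notation "E" => EuclideanSpace ℝ (Fin n)
local notation "⟪" x ", " y "⟫" => @inner ℝ _ _ x y

theorem aux_gradient_contDiff {ψ : E → ℝ} (h : ContDiff ℝ 2 ψ) :
    ContDiff ℝ 1 (gradient ψ) := by
  have h1 : ContDiff ℝ 1 (fderiv ℝ ψ) := h.fderiv_right (by norm_num)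
  exact (toDual ℝ E).symm.contDiff.comp h1

theorem aux_contHess {ψ : E → ℝ} (h : ContDiff ℝ 2 ψ) :
    Continuous (fderiv ℝ (gradient ψ)) :=
  (aux_gradient_contDiff h).continuous_fderiv one_ne_zero

theorem aux_infLap_continuous {ψ : E → ℝ} (h : ContDiff ℝ 2 ψ) :
    Continuous (infLap n ψ) := by
  have hg : Continuous (gradient ψ) := (aux_gradient_contDiff h).continuous
  exact ((aux_contHess h).clm_apply hg).inner hg

theorem aux_lap_continuous {ψ : E → ℝ} (h : ContDiff ℝ 2 ψ) :
    Continuous (lap n ψ) := by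
  apply continuous_finset_sum
  intro i _
  exact ((aux_contHess h).clm_apply continuous_const).inner continuous_const

theorem aux_hasFDerivAt_q (x₀ y : E) :
    HasFDerivAt (fun y : E => ⟪y - x₀, y - x₀⟫)
      ((2:ℝ) • (innerSL ℝ (y - x₀))) y := by
  have h : HasFDerivAt (fun y : E => y - x₀) (ContinuousLinearMap.id ℝ E) y :=
    (hasFDerivAt_id y).sub_const x₀
  have := h.inner ℝ h
  refine this.congr_fderiv ?_
  ext v
  simp [fderivInnerCLM_apply, real_inner_comm, sub_mul, mul_sub, Finset.sum_sub_distrib,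
    mul_comm, two_mul]
  rw [inner_sub_right, real_inner_comm y v, real_inner_comm x₀ v]
  ring

theorem aux_hasFDerivAt_c (x₀ y : E) :
    HasFDerivAt (fun y : E => ⟪y - x₀, y - x₀⟫ ^ 2)
      ((4 * ⟪y - x₀, y - x₀⟫) • (innerSL ℝ (y - x₀))) y := by
  have h2 := ((aux_hasFDerivAt_q x₀ y).mul (aux_hasFDerivAt_q x₀ y))
  have heq : (fun y : E => ⟪y - x₀, y - x₀⟫ ^ 2)
      = fun y : E => ⟪y - x₀, y - x₀⟫ * ⟪y - x₀, y - x₀⟫ := by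
    ext z; ring
  rw [heq]
  refine h2.congr_fderiv ?_
  ext v
  simp
  ring

theorem aux_symm_innerSL (w : E) : (toDual ℝ E).symm (innerSL ℝ w) = w := by
  apply (toDual ℝ E).injective
  rw [LinearIsometryEquiv.apply_symm_apply]
  ext v
  simp [toDual_apply_apply]

end Aux

set_option maxHeartbeats 1000000 in
/-- a uniform limit of viscosity supersolutions of the `p_k`-Laplace
equations, `p_k → ∞`, is a viscosity supersolution of `Δ_∞ u = 0`. -/
theorem limit_is_infinity_supersolution
    (n : ℕ) (p : ℕ → ℝ) (hp2 : ∀ k, 2 < p k) (hp : Tendsto p atTop atTop)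
    (u : EuclideanSpace ℝ (Fin n) → ℝ) (uk : ℕ → EuclideanSpace ℝ (Fin n) → ℝ)
    (hu : Continuous u) (huk : ∀ k, Continuous (uk k))
    (hsuper : ∀ k, ∀ ψ : EuclideanSpace ℝ (Fin n) → ℝ, ContDiff ℝ 2 ψ →
      ∀ x, IsLocalMin (fun y => uk k y - ψ y) x → gradient ψ x ≠ 0 →
        (p k - 2) * ‖gradient ψ x‖ ^ (p k - 4) * infLap n ψ x
          + ‖gradient ψ x‖ ^ (p k - 2) * lap n ψ x ≤ 0)
    (hconv : TendstoUniformly uk u atTop) :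
    ∀ ψ : EuclideanSpace ℝ (Fin n) → ℝ, ContDiff ℝ 2 ψ →
      ∀ x₀, IsLocalMin (fun y => u y - ψ y) x₀ → infLap n ψ x₀ ≤ 0 := by
  classical
  intro ψ hψ x₀ hmin
  by_cases hg0 : gradient ψ x₀ = 0
  · rw [infLap, hg0]
    simp
  -- the perturbed test function
  set q : EuclideanSpace ℝ (Fin n) → ℝ := fun y => @inner ℝ _ _ (y - x₀) (y - x₀) with hq
  set c : EuclideanSpace ℝ (Fin n) → ℝ := fun y => q y ^ 2 with hc
  set φ : EuclideanSpace ℝ (Fin n) → ℝ := fun y => ψ y - c y with hφdef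
  have hqx₀ : q x₀ = 0 := by simp [hq]
  have hcx₀ : c x₀ = 0 := by simp [hc, hqx₀]
  have hqpos : ∀ y : EuclideanSpace ℝ (Fin n), y ≠ x₀ → 0 < q y := by
    intro y hy
    have hne : y - x₀ ≠ 0 := sub_ne_zero.mpr hy
    have h1 : q y = ‖y - x₀‖ ^ 2 := real_inner_self_eq_norm_sq _
    rw [h1]
    exact pow_pos (norm_pos_iff.mpr hne) 2
  have hcC2 : ContDiff ℝ 2 c := by
    have : ContDiff ℝ 2 q :=
      ContDiff.inner ℝ (contDiff_id.sub contDiff_const) (contDiff_id.sub contDiff_const)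
    exact this.pow 2
  have hφ : ContDiff ℝ 2 φ := hψ.sub hcC2
  -- gradient of φ
  have hgradc : ∀ y : EuclideanSpace ℝ (Fin n), HasGradientAt c ((4 * q y) • (y - x₀)) y := by
    intro y
    rw [hasGradientAt_iff_hasFDerivAt]
    have heq : (InnerProductSpace.toDual ℝ (EuclideanSpace ℝ (Fin n))) ((4 * q y) • (y - x₀))
        = (4 * @inner ℝ _ _ (y - x₀) (y - x₀)) • innerSL ℝ (y - x₀) := by
      ext v
      simp [hq, real_inner_smul_left]
    rw [heq]
    exact aux_hasFDerivAt_c x₀ y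
  have hgradφ : ∀ y : EuclideanSpace ℝ (Fin n), HasGradientAt φ (gradient ψ y - (4 * q y) • (y - x₀)) y := by
    intro y
    have h1 : HasGradientAt ψ (gradient ψ y) y :=
      ((hψ.differentiable (by norm_num)) y).hasGradientAt
    rw [hasGradientAt_iff_hasFDerivAt] at h1 ⊢
    have := h1.sub (hgradc y).hasFDerivAt
    refine this.congr_fderiv ?_
    simp [map_sub]
  have hgradφ_eq : gradient φ = fun y => gradient ψ y - (4 * q y) • (y - x₀) :=
    gradient_eq fun y => hgradφ y
  have hgφx₀ : gradient φ x₀ = gradient ψ x₀ := by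
    rw [hgradφ_eq]; simp [hqx₀]
  -- Hessian of φ at x₀ equals Hessian of ψ at x₀
  have hHess : fderiv ℝ (gradient φ) x₀ = fderiv ℝ (gradient ψ) x₀ := by
    have hG : HasFDerivAt (fun y : EuclideanSpace ℝ (Fin n) => (4 * q y) • (y - x₀))
        (0 : EuclideanSpace ℝ (Fin n) →L[ℝ] EuclideanSpace ℝ (Fin n)) x₀ := by
      have hq' : HasFDerivAt (fun y : EuclideanSpace ℝ (Fin n) => 4 * q y)
          ((4:ℝ) • ((2:ℝ) • innerSL ℝ (x₀ - x₀ : EuclideanSpace ℝ (Fin n)))) x₀ :=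
        (aux_hasFDerivAt_q x₀ x₀).const_mul 4
      have hid : HasFDerivAt (fun y : EuclideanSpace ℝ (Fin n) => y - x₀) (ContinuousLinearMap.id ℝ (EuclideanSpace ℝ (Fin n))) x₀ :=
        (hasFDerivAt_id x₀).sub_const x₀
      have := hq'.smul hid
      refine this.congr_fderiv ?_
      ext v
      simp [hqx₀]
    have hψ' : HasFDerivAt (gradient ψ) (fderiv ℝ (gradient ψ) x₀) x₀ :=
      (((aux_gradient_contDiff hψ).differentiable one_ne_zero) x₀).hasFDerivAt
    have hsub := hψ'.sub hG
    rw [sub_zero] at hsub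
    have : HasFDerivAt (gradient φ) (fderiv ℝ (gradient ψ) x₀) x₀ := by
      rw [hgradφ_eq]; exact hsub
    exact this.fderiv
  have hinfeq : infLap n φ x₀ = infLap n ψ x₀ := by
    rw [infLap, infLap, hHess, hgφx₀]
  rw [← hinfeq]
  -- choose a radius
  have hgφcont : Continuous (gradient φ) := (aux_gradient_contDiff hφ).continuous
  have hgφx₀ne : gradient φ x₀ ≠ 0 := by rw [hgφx₀]; exact hg0
  obtain ⟨r1, hr1, hball1⟩ : ∃ r1 > 0, ∀ y ∈ Metric.ball x₀ r1, gradient φ y ≠ 0 := by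
    have : IsOpen {y : EuclideanSpace ℝ (Fin n) | gradient φ y ≠ 0} :=
      isOpen_compl_iff.mpr (isClosed_singleton.preimage hgφcont)
    obtain ⟨r1, hr1, hsub⟩ := Metric.isOpen_iff.mp this x₀ hgφx₀ne
    exact ⟨r1, hr1, fun y hy => hsub hy⟩
  obtain ⟨r0, hr0, hball0⟩ : ∃ r0 > 0, ∀ y ∈ Metric.ball x₀ r0,
      u x₀ - ψ x₀ ≤ u y - ψ y := by
    obtain ⟨r0, hr0, h⟩ := Metric.eventually_nhds_iff_ball.mp hmin
    exact ⟨r0, hr0, h⟩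
  set r : ℝ := min r0 r1 / 2 with hrdef
  have hrpos : 0 < r := by positivity
  have hrsub0 : Metric.closedBall x₀ r ⊆ Metric.ball x₀ r0 := by
    apply Metric.closedBall_subset_ball
    have : min r0 r1 ≤ r0 := min_le_left _ _
    linarith
  have hrsub1 : Metric.closedBall x₀ r ⊆ Metric.ball x₀ r1 := by
    apply Metric.closedBall_subset_ball
    have : min r0 r1 ≤ r1 := min_le_right _ _
    linarith
  have hcomp : IsCompact (Metric.closedBall x₀ r) := isCompact_closedBall x₀ r
  have hx₀mem : x₀ ∈ Metric.closedBall x₀ r := Metric.mem_closedBall_self hrpos.le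
  -- minimizers
  have hsel : ∀ k, ∃ z ∈ Metric.closedBall x₀ r,
      IsMinOn (fun y => uk k y - φ y) (Metric.closedBall x₀ r) z := by
    intro k
    exact hcomp.exists_isMinOn ⟨x₀, hx₀mem⟩ ((huk k).sub hφ.continuous).continuousOn
  choose x hxmem hxmin using hsel
  -- x k → x₀
  have hφx₀ : φ x₀ = ψ x₀ := by simp [hφdef, hcx₀]
  have hstrict : ∀ y ∈ Metric.closedBall x₀ r, y ≠ x₀ →
      u x₀ - φ x₀ < u y - φ y := by
    intro y hy hyne
    have h1 : u x₀ - ψ x₀ ≤ u y - ψ y := hball0 y (hrsub0 hy)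
    have h2 : 0 < c y := by
      have := hqpos y hyne
      simp only [hc]
      positivity
    have : u y - φ y = (u y - ψ y) + c y := by simp [hφdef]; ring
    rw [this, hφx₀]
    linarith
  have htend : Filter.Tendsto x atTop (nhds x₀) := by
    rw [Metric.tendsto_nhds]
    intro ε hε
    rcases lt_or_ge r ε with hcase | hcase
    · filter_upwards with k
      have := Metric.mem_closedBall.mp (hxmem k)
      linarith
    · set K : Set (EuclideanSpace ℝ (Fin n)) := Metric.closedBall x₀ r \ Metric.ball x₀ ε with hK
      by_cases hKne : K.Nonempty
      · have hKcomp : IsCompact K := hcomp.diff Metric.isOpen_ball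
        obtain ⟨z, hzK, hzmin⟩ :=
          hKcomp.exists_isMinOn hKne (hu.sub hφ.continuous).continuousOn
        set m : ℝ := (u z - φ z) - (u x₀ - φ x₀) with hm
        have hzne : z ≠ x₀ := by
          intro h
          have := hzK.2
          rw [h] at this
          exact this (Metric.mem_ball_self hε)
        have hmpos : 0 < m := by
          have := hstrict z hzK.1 hzne
          simp only [hm]; linarith
        have hunif := Metric.tendstoUniformly_iff.mp hconv (m / 2) (by positivity)
        filter_upwards [hunif] with k hk
        by_contra hcon
        push_neg at hcon
        have hxK : x k ∈ K := ⟨hxmem k, by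
          simp only [Metric.mem_ball, not_lt]
          exact hcon⟩
        have h1 : u z - φ z ≤ u (x k) - φ (x k) := hzmin hxK
        have h2 : uk k (x k) - φ (x k) ≤ uk k x₀ - φ x₀ := hxmin k hx₀mem
        have h3 : |u (x k) - uk k (x k)| < m / 2 := by
          have := hk (x k); rwa [Real.dist_eq] at this
        have h4 : |u x₀ - uk k x₀| < m / 2 := by
          have := hk x₀; rwa [Real.dist_eq] at this
        rw [abs_lt] at h3 h4
        simp only [hm] at hmpos h1
        linarith
      · filter_upwards with k
        have : x k ∉ K := fun h => hKne ⟨x k, h⟩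
        simp only [hK, Set.mem_diff, not_and, not_not] at this
        exact Metric.mem_ball.mp (this (hxmem k))
  -- eventually the minimizer is interior, giving local minima
  have hev_ball : ∀ᶠ k in atTop, x k ∈ Metric.ball x₀ r := by
    have hmem : Metric.ball x₀ r ∈ nhds x₀ := Metric.ball_mem_nhds x₀ hrpos
    exact htend hmem
  have hev_ineq : ∀ᶠ k in atTop,
      infLap n φ (x k) ≤ ‖gradient φ (x k)‖ ^ 2 * (-(lap n φ (x k))) / (p k - 2) := by
    filter_upwards [hev_ball] with k hk
    have hloc : IsLocalMin (fun y => uk k y - φ y) (x k) :=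
      (hxmin k).isLocalMin
        (Filter.mem_of_superset (Metric.isOpen_ball.mem_nhds hk) Metric.ball_subset_closedBall)
    have hgne : gradient φ (x k) ≠ 0 := hball1 (x k) (hrsub1 (Metric.ball_subset_closedBall hk))
    have hA : 0 < ‖gradient φ (x k)‖ := norm_pos_iff.mpr hgne
    have hineq := hsuper k φ hφ (x k) hloc hgne
    set A := ‖gradient φ (x k)‖ with hAdef
    set I := infLap n φ (x k) with hIdef
    set L := lap n φ (x k) with hLdef
    have hpk : 0 < p k - 2 := by have := hp2 k; linarith
    have hsplit : A ^ (p k - 2) = A ^ (p k - 4) * A ^ (2:ℝ) := by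
      rw [← Real.rpow_add hA]
      congr 1
      ring
    have hA2 : A ^ (2:ℝ) = A ^ (2:ℕ) := by
      rw [show (2:ℝ) = ((2:ℕ):ℝ) by norm_num, Real.rpow_natCast]
    have hApow : 0 < A ^ (p k - 4) := Real.rpow_pos_of_pos hA _
    rw [hsplit, hA2] at hineq
    set B := A ^ (p k - 4) with hBdef
    have h5 : (p k - 2) * I + A ^ 2 * L ≤ 0 := by
      by_contra hcon
      push_neg at hcon
      nlinarith [mul_pos hApow hcon]
    rw [le_div_iff₀ hpk]
    nlinarith [h5]
  -- pass to the limit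
  have hcont_inf : Filter.Tendsto (fun k => infLap n φ (x k)) atTop (nhds (infLap n φ x₀)) :=
    ((aux_infLap_continuous hφ).tendsto x₀).comp htend
  have hbound_tend : Filter.Tendsto
      (fun k => ‖gradient φ (x k)‖ ^ 2 * (-(lap n φ (x k))) / (p k - 2)) atTop (nhds 0) := by
    have h1 : Filter.Tendsto (fun k => ‖gradient φ (x k)‖ ^ 2 * (-(lap n φ (x k)))) atTop
        (nhds (‖gradient φ x₀‖ ^ 2 * (-(lap n φ x₀)))) := by
      apply Filter.Tendsto.mul
      · exact (((hgφcont.norm.pow 2).tendsto x₀).comp htend)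
      · exact (((aux_lap_continuous hφ).neg.tendsto x₀).comp htend)
    have h2 : Filter.Tendsto (fun k => (p k - 2)⁻¹) atTop (nhds 0) := by
      apply Filter.Tendsto.inv_tendsto_atTop
      exact Filter.tendsto_atTop_add_const_right _ _ hp
    have := h1.mul h2
    rw [mul_zero] at this
    simpa [div_eq_mul_inv] using this
  have := le_of_tendsto_of_tendsto hcont_inf hbound_tend hev_ineq
  simpa using this
end

section
/- Let D ⊆ ℝⁿ be open, let (p_k)_{k∈ℕ} be a sequence of reals with p_k > 2 and p_k → ∞, and let (u_k)_{k∈ℕ} be continuous functions on D, each a viscosity solution of the p_k-Laplace equation in D in the following sense: for every C² function ψ and every point x ∈ D at which u_k − ψ attains a local minimum (respectively, a local maximum) and at which ∇ψ(x) ≠ 0, one has (p_k − 2)‖∇ψ(x)‖^{p_k−4} Δ_∞ψ(x) + ‖∇ψ(x)‖^{p_k−2} Δψ(x) ≤ 0 (respectively, ≥ 0). If u_k → u locally uniformly on D, then u is a viscosity solution of Δ_∞u = 0 in D: for every C² function ψ and every x₀ ∈ D at which u − ψ attains a local minimum (respectively, a local maximum), Δ_∞ψ(x₀) ≤ 0 (respectively,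 Δ_∞ψ(x₀) ≥ 0). -/
open Filter

open InnerProductSpace

variable {n : ℕ}

local notation "E" => EuclideanSpace ℝ (Fin n)

lemma grad_eq (ψ : E → ℝ) : gradient ψ = fun x => (toDual ℝ E).symm (fderiv ℝ ψ x) := rfl

lemma contDiff_gradient {ψ : E → ℝ} (hψ : ContDiff ℝ 2 ψ) : ContDiff ℝ 1 (gradient ψ) := by
  rw [grad_eq]
  exact (toDual ℝ E).symm.contDiff.comp (hψ.fderiv_right (by norm_num))

lemma gradient_sub' {ψ q : E → ℝ} {x : E} (hψ : DifferentiableAt ℝ ψ x)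
    (hq : DifferentiableAt ℝ q x) :
    gradient (fun y => ψ y - q y) x = gradient ψ x - gradient q x := by
  simp only [grad_eq, fderiv_fun_sub hψ hq, map_sub]

lemma gradient_neg' (ψ : E → ℝ) (x : E) :
    gradient (fun y => -ψ y) x = -gradient ψ x := by
  simp only [grad_eq, fderiv_fun_neg, map_neg]

lemma fderiv_gradient_neg (ψ : E → ℝ) (x : E) :
    fderiv ℝ (gradient (fun y => -ψ y)) x = -fderiv ℝ (gradient ψ) x := by
  have h : gradient (fun y => -ψ y) = fun y => -gradient ψ y := funext (gradient_neg' ψ)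
  rw [h, fderiv_fun_neg]

lemma infLap_neg (ψ : E → ℝ) (x : E) :
    infLap n (fun y => -ψ y) x = -infLap n ψ x := by
  simp only [infLap, fderiv_gradient_neg, gradient_neg', ContinuousLinearMap.neg_apply,
    map_neg, inner_neg_neg, inner_neg_left, inner_neg_right, neg_neg]

lemma lap_neg (ψ : E → ℝ) (x : E) :
    lap n (fun y => -ψ y) x = -lap n ψ x := by
  simp only [lap, fderiv_gradient_neg, ContinuousLinearMap.neg_apply, inner_neg_left,
    ← Finset.sum_neg_distrib]

lemma continuous_infLap {ψ : E → ℝ} (hψ : ContDiff ℝ 2 ψ) : Continuous (infLap n ψ) := by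
  have hG : Continuous (gradient ψ) := (contDiff_gradient hψ).continuous
  have hA : Continuous (fderiv ℝ (gradient ψ)) :=
    ((contDiff_gradient hψ).continuous_fderiv one_ne_zero)
  exact Continuous.inner (hA.clm_apply hG) hG

lemma continuous_lap {ψ : E → ℝ} (hψ : ContDiff ℝ 2 ψ) : Continuous (lap n ψ) := by
  have hA : Continuous (fderiv ℝ (gradient ψ)) :=
    ((contDiff_gradient hψ).continuous_fderiv one_ne_zero)
  exact continuous_finset_sum _ fun i _ =>
    Continuous.inner (hA.clm_apply continuous_const) continuous_const

lemma q_hasGradient (c y : E) :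
    HasGradientAt (fun z : E => ‖z - c‖ ^ 2 * ‖z - c‖ ^ 2) ((4 * ‖y - c‖ ^ 2) • (y - c)) y := by
  have h1 : HasFDerivAt (fun z : E => z - c) (ContinuousLinearMap.id ℝ E) y :=
    (hasFDerivAt_id y).sub_const c
  have h2 := h1.inner ℝ h1
  have h4 := h2.mul h2
  rw [hasGradientAt_iff_hasFDerivAt]
  have hfun : (fun z : E => ‖z - c‖ ^ 2 * ‖z - c‖ ^ 2)
      = fun z : E => (inner ℝ (z - c) (z - c) : ℝ) * inner ℝ (z - c) (z - c) := by
    funext z; rw [real_inner_self_eq_norm_sq]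
  rw [hfun]
  convert h4 using 1
  · rfl
  · rfl
  ext v
  simp only [InnerProductSpace.toDual_apply_apply, inner_smul_left, RingHom.id_apply,
    ContinuousLinearMap.coe_smul', Pi.smul_apply, ContinuousLinearMap.coe_comp',
    Function.comp_apply, ContinuousLinearMap.prod_apply, ContinuousLinearMap.coe_id', id_eq,
    fderivInnerCLM_apply, smul_eq_mul, ContinuousLinearMap.add_apply,
    real_inner_self_eq_norm_sq]
  rw [real_inner_comm]
  simp only [starRingEnd_apply, star_trivial]
  ring

lemma q_grad_eq (c : E) :
    gradient (fun z : E => ‖z - c‖ ^ 2 * ‖z - c‖ ^ 2)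
      = fun y => (4 * ‖y - c‖ ^ 2) • (y - c) :=
  funext fun y => (q_hasGradient c y).gradient

lemma q_grad_zero (c : E) : gradient (fun z : E => ‖z - c‖ ^ 2 * ‖z - c‖ ^ 2) c = 0 := by
  rw [q_grad_eq]; simp

lemma q_fderiv_grad (c : E) :
    HasFDerivAt (gradient (fun z : E => ‖z - c‖ ^ 2 * ‖z - c‖ ^ 2)) (0 : E →L[ℝ] E) c := by
  rw [q_grad_eq, hasFDerivAt_iff_isLittleO_nhds_zero]
  have h : (fun h : E => (4 * ‖c + h - c‖ ^ 2) • (c + h - c) - (4 * ‖c - c‖ ^ 2) • (c - c)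
      - (0 : E →L[ℝ] E) h) = fun h : E => (4 * ‖h‖ ^ 2) • h := by
    funext y; simp
  rw [h, Asymptotics.isLittleO_iff]
  intro ε hε
  have hcont : Filter.Tendsto (fun h : E => 4 * ‖h‖ ^ 2) (nhds 0) (nhds 0) := by
    have : Filter.Tendsto (fun h : E => 4 * ‖h‖ ^ 2) (nhds 0)
        (nhds (4 * ‖(0 : E)‖ ^ 2)) :=
      (Continuous.mul continuous_const (continuous_norm.pow 2)).tendsto 0
    simpa using this
  filter_upwards [hcont.eventually_le_const hε] with y hy
  rw [norm_smul, Real.norm_eq_abs, abs_of_nonneg (by positivity)]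
  exact mul_le_mul_of_nonneg_right hy (norm_nonneg _)

lemma q_contDiff (c : E) : ContDiff ℝ 2 (fun z : E => ‖z - c‖ ^ 2 * ‖z - c‖ ^ 2) := by
  have h : ContDiff ℝ 2 (fun z : E => ‖z - c‖ ^ 2) :=
    (contDiff_norm_sq ℝ).comp (contDiff_id.sub contDiff_const)
  exact h.mul h

lemma aux_min
    (D : Set (EuclideanSpace ℝ (Fin n))) (hD : IsOpen D)
    (p : ℕ → ℝ) (hp2 : ∀ k, 2 < p k) (hp : Tendsto p atTop atTop)
    (u : EuclideanSpace ℝ (Fin n) → ℝ) (uk : ℕ → EuclideanSpace ℝ (Fin n) → ℝ)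
    (huk : ∀ k, ContinuousOn (uk k) D)
    (hsuper : ∀ k, ∀ ψ : EuclideanSpace ℝ (Fin n) → ℝ, ContDiff ℝ 2 ψ →
      ∀ x ∈ D, IsLocalMin (fun y => uk k y - ψ y) x → gradient ψ x ≠ 0 →
        (p k - 2) * ‖gradient ψ x‖ ^ (p k - 4) * infLap n ψ x
          + ‖gradient ψ x‖ ^ (p k - 2) * lap n ψ x ≤ 0)
    (hconv : TendstoLocallyUniformlyOn uk u atTop D) :
    ∀ ψ : EuclideanSpace ℝ (Fin n) → ℝ, ContDiff ℝ 2 ψ →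
      ∀ x₀ ∈ D, IsLocalMin (fun y => u y - ψ y) x₀ → infLap n ψ x₀ ≤ 0 := by
  intro ψ hψ c hcD hmin
  by_cases hg : gradient ψ c = 0
  · simp [infLap, hg]
  set q : E → ℝ := fun z => ‖z - c‖ ^ 2 * ‖z - c‖ ^ 2 with hqdef
  set φ : E → ℝ := fun y => ψ y - q y with hφdef
  have hq2 : ContDiff ℝ 2 q := q_contDiff c
  have hφ2 : ContDiff ℝ 2 φ := hψ.sub hq2
  have hGφ : ∀ y, gradient φ y = gradient ψ y - gradient q y := by
    intro y
    exact gradient_sub' (hψ.differentiable (by norm_num) y) (hq2.differentiable (by norm_num) y)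
  have hGφc : gradient φ c = gradient ψ c := by
    rw [hGφ]
    rw [hqdef, q_grad_zero, sub_zero]
  have hAφ : fderiv ℝ (gradient φ) c = fderiv ℝ (gradient ψ) c := by
    have h1 : gradient φ = fun y => gradient ψ y - gradient q y := funext hGφ
    have hqd : HasFDerivAt (gradient q) (0 : E →L[ℝ] E) c := by rw [hqdef]; exact q_fderiv_grad c
    rw [h1, fderiv_fun_sub (((contDiff_gradient hψ).differentiable one_ne_zero) c)
      hqd.differentiableAt, hqd.fderiv, sub_zero]
  have hIeq : infLap n φ c = infLap n ψ c := by
    simp only [infLap]; rw [hGφc, hAφ]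
  -- choice of radius
  obtain ⟨r1, hr1, hball1⟩ := Metric.isOpen_iff.mp hD c hcD
  have hmin' : ∀ᶠ y in nhds c, u c - ψ c ≤ u y - ψ y := hmin
  obtain ⟨r2, hr2, hball2⟩ := Metric.eventually_nhds_iff_ball.mp hmin'
  set r := min (r1 / 2) (r2 / 2) with hrdef
  have hr : 0 < r := lt_min (by linarith) (by linarith)
  set K := Metric.closedBall c r with hKdef
  have hKD : K ⊆ D := fun x hx => hball1 (Metric.mem_ball.mpr
    (lt_of_le_of_lt (Metric.mem_closedBall.mp hx)
      (lt_of_le_of_lt (min_le_left _ _) (by linarith))))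
  have hKmin : ∀ x ∈ K, u c - ψ c ≤ u x - ψ x := fun x hx => hball2 x (Metric.mem_ball.mpr
    (lt_of_le_of_lt (Metric.mem_closedBall.mp hx)
      (lt_of_le_of_lt (min_le_right _ _) (by linarith))))
  have hcK : c ∈ K := Metric.mem_closedBall_self hr.le
  have hKcomp : IsCompact K := isCompact_closedBall c r
  have hφcont : Continuous φ := hφ2.continuous
  have hex : ∀ k, ∃ x ∈ K, IsMinOn (fun y => uk k y - φ y) K x := fun k =>
    hKcomp.exists_isMinOn ⟨c, hcK⟩ (((huk k).mono hKD).sub hφcont.continuousOn)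
  choose xk hxkK hxkmin using hex
  have hq0 : q c = 0 := by rw [hqdef]; simp
  have hstrict : ∀ x ∈ K, (u c - φ c) + q x ≤ u x - φ x := by
    intro x hx
    have h := hKmin x hx
    rw [hφdef]
    simp only
    linarith
  have hUC : ∀ ε > (0:ℝ), ∀ᶠ k in atTop, ∀ x ∈ K, dist (u x) (uk k x) < ε := by
    have h := (tendstoLocallyUniformlyOn_iff_forall_isCompact hD).mp hconv K hKD hKcomp
    exact fun ε hε => (Metric.tendstoUniformlyOn_iff.mp h) ε hε
  have hxc : Tendsto xk atTop (nhds c) := by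
    rw [Metric.tendsto_nhds]
    intro δ hδ
    have hε : (0:ℝ) < δ ^ 4 / 2 := by positivity
    filter_upwards [hUC _ hε] with k hk
    have h1 : uk k (xk k) - φ (xk k) ≤ uk k c - φ c := hxkmin k hcK
    have h2 := hk _ (hxkK k)
    have h3 := hk _ hcK
    have h4 := hstrict (xk k) (hxkK k)
    rw [Real.dist_eq] at h2 h3
    obtain ⟨h2a, h2b⟩ := abs_lt.mp h2
    obtain ⟨h3a, h3b⟩ := abs_lt.mp h3
    have hq4 : q (xk k) < δ ^ 4 := by linarith
    by_contra hcon
    push_neg at hcon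
    have hd : δ ≤ ‖xk k - c‖ := by rwa [dist_eq_norm] at hcon
    have hsq : δ ^ 2 ≤ ‖xk k - c‖ ^ 2 := pow_le_pow_left₀ hδ.le hd 2
    have : δ ^ 4 ≤ q (xk k) := by
      have hqx : q (xk k) = ‖xk k - c‖ ^ 2 * ‖xk k - c‖ ^ 2 := by rw [hqdef]
      rw [hqx]
      nlinarith
    linarith
  have hGcont : Continuous (gradient φ) := (contDiff_gradient hφ2).continuous
  have hGtend : Tendsto (fun k => gradient φ (xk k)) atTop (nhds (gradient ψ c)) := by
    have h := (hGcont.tendsto c).comp hxc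
    rwa [hGφc] at h
  have hGne : ∀ᶠ k in atTop, gradient φ (xk k) ≠ 0 := hGtend.eventually_ne hg
  have hballk : ∀ᶠ k in atTop, dist (xk k) c < r := Metric.tendsto_nhds.mp hxc r hr
  have hineq : ∀ᶠ k in atTop, infLap n φ (xk k) ≤
      ‖gradient φ (xk k)‖ ^ 2 * |lap n φ (xk k)| / (p k - 2) := by
    filter_upwards [hGne, hballk] with k hk1 hk2
    have hloc : IsLocalMin (fun y => uk k y - φ y) (xk k) :=
      (hxkmin k).isLocalMin (Filter.mem_of_superset
        ((Metric.isOpen_ball).mem_nhds (Metric.mem_ball.mpr hk2)) Metric.ball_subset_closedBall)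
    have hxD : xk k ∈ D := hKD (hxkK k)
    have hmain := hsuper k φ hφ2 (xk k) hxD hloc hk1
    set g := ‖gradient φ (xk k)‖ with hgdef
    have hgpos : 0 < g := norm_pos_iff.mpr hk1
    set I := infLap n φ (xk k) with hIdef
    set L := lap n φ (xk k) with hLdef
    have e1 : (0:ℝ) < p k - 2 := by linarith [hp2 k]
    have e2 : (0:ℝ) < g ^ (p k - 4) := Real.rpow_pos_of_pos hgpos _
    have key : g ^ (p k - 2) = g ^ (2:ℕ) * g ^ (p k - 4) := by
      rw [← Real.rpow_natCast g 2, ← Real.rpow_add hgpos]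
      congr 1
      ring
    rw [le_div_iff₀ e1]
    refine le_of_mul_le_mul_right ?_ e2
    have habs : -(g ^ (p k - 2) * L) ≤ g ^ (p k - 2) * |L| := by
      rw [neg_mul_eq_mul_neg]
      exact mul_le_mul_of_nonneg_left (neg_le_abs L) (Real.rpow_nonneg hgpos.le _)
    calc I * (p k - 2) * g ^ (p k - 4) = (p k - 2) * g ^ (p k - 4) * I := by ring
      _ ≤ -(g ^ (p k - 2) * L) := by linarith
      _ ≤ g ^ (p k - 2) * |L| := habs
      _ = g ^ (2:ℕ) * |L| * g ^ (p k - 4) := by rw [key]; ring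
  have hItend : Tendsto (fun k => infLap n φ (xk k)) atTop (nhds (infLap n ψ c)) := by
    have h := ((continuous_infLap hφ2).tendsto c).comp hxc
    rwa [hIeq] at h
  have hnum : Tendsto (fun k => ‖gradient φ (xk k)‖ ^ 2 * |lap n φ (xk k)|) atTop
      (nhds (‖gradient φ c‖ ^ 2 * |lap n φ c|)) :=
    (((hGcont.norm.pow 2).mul (continuous_lap hφ2).abs).tendsto c).comp hxc
  have hden : Tendsto (fun k => p k - 2) atTop atTop :=
    tendsto_atTop_add_const_right _ _ hp
  have hb : Tendsto (fun k => ‖gradient φ (xk k)‖ ^ 2 * |lap n φ (xk k)| / (p k - 2)) atTop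
      (nhds 0) := hnum.div_atTop hden
  exact le_of_tendsto_of_tendsto hItend hb hineq

lemma tlu_neg {D : Set (EuclideanSpace ℝ (Fin n))} {uk : ℕ → EuclideanSpace ℝ (Fin n) → ℝ}
    {u : EuclideanSpace ℝ (Fin n) → ℝ}
    (h : TendstoLocallyUniformlyOn uk u atTop D) :
    TendstoLocallyUniformlyOn (fun k y => -uk k y) (fun y => -u y) atTop D := by
  rw [Metric.tendstoLocallyUniformlyOn_iff] at h ⊢
  intro ε hε x hx
  obtain ⟨t, ht, hft⟩ := h ε hε x hx
  exact ⟨t, ht, hft.mono fun k hk y hy => by simpa [dist_neg_neg] using hk y hy⟩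

theorem limit_is_infinity_harmonic'
    (D : Set (EuclideanSpace ℝ (Fin n))) (hD : IsOpen D)
    (p : ℕ → ℝ) (hp2 : ∀ k, 2 < p k) (hp : Tendsto p atTop atTop)
    (u : EuclideanSpace ℝ (Fin n) → ℝ) (uk : ℕ → EuclideanSpace ℝ (Fin n) → ℝ)
    (hu : ContinuousOn u D) (huk : ∀ k, ContinuousOn (uk k) D)
    (hsuper : ∀ k, ∀ ψ : EuclideanSpace ℝ (Fin n) → ℝ, ContDiff ℝ 2 ψ →
      ∀ x ∈ D, IsLocalMin (fun y => uk k y - ψ y) x → gradient ψ x ≠ 0 →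
        (p k - 2) * ‖gradient ψ x‖ ^ (p k - 4) * infLap n ψ x
          + ‖gradient ψ x‖ ^ (p k - 2) * lap n ψ x ≤ 0)
    (hsub : ∀ k, ∀ ψ : EuclideanSpace ℝ (Fin n) → ℝ, ContDiff ℝ 2 ψ →
      ∀ x ∈ D, IsLocalMax (fun y => uk k y - ψ y) x → gradient ψ x ≠ 0 →
        0 ≤ (p k - 2) * ‖gradient ψ x‖ ^ (p k - 4) * infLap n ψ x
          + ‖gradient ψ x‖ ^ (p k - 2) * lap n ψ x)
    (hconv : TendstoLocallyUniformlyOn uk u atTop D) :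
    (∀ ψ : EuclideanSpace ℝ (Fin n) → ℝ, ContDiff ℝ 2 ψ →
      ∀ x₀ ∈ D, IsLocalMin (fun y => u y - ψ y) x₀ → infLap n ψ x₀ ≤ 0) ∧
    (∀ ψ : EuclideanSpace ℝ (Fin n) → ℝ, ContDiff ℝ 2 ψ →
      ∀ x₀ ∈ D, IsLocalMax (fun y => u y - ψ y) x₀ → 0 ≤ infLap n ψ x₀) := by
  constructor
  · exact aux_min D hD p hp2 hp u uk huk hsuper hconv
  · intro ψ hψ x₀ hx₀ hmax
    have hsuper' : ∀ k, ∀ χ : EuclideanSpace ℝ (Fin n) → ℝ, ContDiff ℝ 2 χ →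
        ∀ x ∈ D, IsLocalMin (fun y => -uk k y - χ y) x → gradient χ x ≠ 0 →
        (p k - 2) * ‖gradient χ x‖ ^ (p k - 4) * infLap n χ x
          + ‖gradient χ x‖ ^ (p k - 2) * lap n χ x ≤ 0 := by
      intro k χ hχ x hx hminx hgx
      have hmax' : IsLocalMax (fun y => uk k y - (fun y => -χ y) y) x := by
        have h := hminx.neg
        have heq : (fun y => -(-uk k y - χ y)) = fun y => uk k y - (fun y => -χ y) y := by
          funext y; ring
        rwa [heq] at h
      have hgx' : gradient (fun y => -χ y) x ≠ 0 := by
        rw [gradient_neg']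
        simpa using hgx
      have h := hsub k (fun y => -χ y) hχ.neg x hx hmax' hgx'
      rw [gradient_neg', infLap_neg, lap_neg, norm_neg] at h
      linarith
    have hminneg : IsLocalMin (fun y => -u y - (fun y => -ψ y) y) x₀ := by
      have h := hmax.neg
      have heq : (fun y => -(u y - ψ y)) = fun y => -u y - (fun y => -ψ y) y := by
        funext y; ring
      rwa [heq] at h
    have h := aux_min D hD p hp2 hp (fun y => -u y) (fun k y => -uk k y)
      (fun k => (huk k).neg) hsuper' (tlu_neg hconv) (fun y => -ψ y) hψ.neg x₀ hx₀ hminneg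
    rw [infLap_neg] at h
    linarith

/-- a locally uniform limit in an open set `D` of viscosity solutions
of the `p_k`-Laplace equations, `p_k → ∞`, is a viscosity solution of `Δ_∞ u = 0` in `D`. -/
theorem limit_is_infinity_harmonic
    (n : ℕ) (D : Set (EuclideanSpace ℝ (Fin n))) (hD : IsOpen D)
    (p : ℕ → ℝ) (hp2 : ∀ k, 2 < p k) (hp : Tendsto p atTop atTop)
    (u : EuclideanSpace ℝ (Fin n) → ℝ) (uk : ℕ → EuclideanSpace ℝ (Fin n) → ℝ)
    (hu : ContinuousOn u D) (huk : ∀ k, ContinuousOn (uk k) D)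
    (hsuper : ∀ k, ∀ ψ : EuclideanSpace ℝ (Fin n) → ℝ, ContDiff ℝ 2 ψ →
      ∀ x ∈ D, IsLocalMin (fun y => uk k y - ψ y) x → gradient ψ x ≠ 0 →
        (p k - 2) * ‖gradient ψ x‖ ^ (p k - 4) * infLap n ψ x
          + ‖gradient ψ x‖ ^ (p k - 2) * lap n ψ x ≤ 0)
    (hsub : ∀ k, ∀ ψ : EuclideanSpace ℝ (Fin n) → ℝ, ContDiff ℝ 2 ψ →
      ∀ x ∈ D, IsLocalMax (fun y => uk k y - ψ y) x → gradient ψ x ≠ 0 →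
        0 ≤ (p k - 2) * ‖gradient ψ x‖ ^ (p k - 4) * infLap n ψ x
          + ‖gradient ψ x‖ ^ (p k - 2) * lap n ψ x)
    (hconv : TendstoLocallyUniformlyOn uk u atTop D) :
    (∀ ψ : EuclideanSpace ℝ (Fin n) → ℝ, ContDiff ℝ 2 ψ →
      ∀ x₀ ∈ D, IsLocalMin (fun y => u y - ψ y) x₀ → infLap n ψ x₀ ≤ 0) ∧
    (∀ ψ : EuclideanSpace ℝ (Fin n) → ℝ, ContDiff ℝ 2 ψ →
      ∀ x₀ ∈ D, IsLocalMax (fun y => u y - ψ y) x₀ → 0 ≤ infLap n ψ x₀) :=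
  limit_is_infinity_harmonic' D hD p hp2 hp u uk hu huk hsuper hsub hconv
end

section
/- Let ψ : ℝⁿ → ℝ be C², let x₀ ∈ ℝⁿ, let (p_k)_{k∈ℕ} be a sequence of reals with p_k > 2 and p_k → ∞, and let x_k → x₀ be a sequence of points such that for every k one has ∇ψ(x_k) ≠ 0 and (p_k − 2)‖∇ψ(x_k)‖^{p_k−4} Δ_∞ψ(x_k) + ‖∇ψ(x_k)‖^{p_k−2} Δψ(x_k) = 0. Then Δ_∞ψ(x₀) = 0. -/
open Filter

/-- passing to the limit in the `p_k`-Laplace equality gives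
`Δ_∞ψ(x₀) = 0`. -/
theorem infLap_eq_zero_of_limit
    (n : ℕ) (ψ : EuclideanSpace ℝ (Fin n) → ℝ) (hψ : ContDiff ℝ 2 ψ)
    (x₀ : EuclideanSpace ℝ (Fin n))
    (p : ℕ → ℝ) (hp2 : ∀ k, 2 < p k) (hp : Tendsto p atTop atTop)
    (x : ℕ → EuclideanSpace ℝ (Fin n)) (hx : Tendsto x atTop (nhds x₀))
    (hgrad : ∀ k, gradient ψ (x k) ≠ 0)
    (heq : ∀ k, (p k - 2) * ‖gradient ψ (x k)‖ ^ (p k - 4) * infLap n ψ (x k)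
      + ‖gradient ψ (x k)‖ ^ (p k - 2) * lap n ψ (x k) = 0) :
    infLap n ψ x₀ = 0 := by
  -- gradient is C¹
  have hg1 : ContDiff ℝ 1 (gradient ψ) := by
    have h1 : ContDiff ℝ 1 (fderiv ℝ ψ) := hψ.fderiv_right (by norm_num)
    have : gradient ψ = fun y => (InnerProductSpace.toDual ℝ
        (EuclideanSpace ℝ (Fin n))).symm (fderiv ℝ ψ y) := rfl
    rw [this]
    exact (InnerProductSpace.toDual ℝ _).symm.contDiff.comp h1
  have hD : Continuous (fun y => fderiv ℝ (gradient ψ) y) :=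
    hg1.continuous_fderiv (by norm_num)
  have hgc : Continuous (gradient ψ) := hg1.continuous
  have hil : Continuous (infLap n ψ) := by
    unfold infLap
    exact (hD.clm_apply hgc).inner hgc
  have hlc : Continuous (lap n ψ) := by
    unfold lap
    exact continuous_finset_sum _ fun i _ =>
      (hD.clm_apply continuous_const).inner continuous_const
  -- rewrite the equation
  have key : ∀ k, infLap n ψ (x k)
      = -(‖gradient ψ (x k)‖ ^ (2:ℝ) * lap n ψ (x k)) / (p k - 2) := by
    intro k
    have hn : (0:ℝ) < ‖gradient ψ (x k)‖ := norm_pos_iff.2 (hgrad k)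
    have hr : ‖gradient ψ (x k)‖ ^ (p k - 2)
        = ‖gradient ψ (x k)‖ ^ (p k - 4) * ‖gradient ψ (x k)‖ ^ (2:ℝ) := by
      rw [← Real.rpow_add hn]; ring_nf
    have ha : ‖gradient ψ (x k)‖ ^ (p k - 4) ≠ 0 :=
      (Real.rpow_pos_of_pos hn _).ne'
    have hp' : p k - 2 ≠ 0 := by have := hp2 k; linarith
    have h := heq k
    rw [hr] at h
    have h2 : ‖gradient ψ (x k)‖ ^ (p k - 4)
        * ((p k - 2) * infLap n ψ (x k)
          + ‖gradient ψ (x k)‖ ^ (2:ℝ) * lap n ψ (x k))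
        = ‖gradient ψ (x k)‖ ^ (p k - 4) * 0 := by
      rw [mul_zero]; linear_combination h
    have h3 := mul_left_cancel₀ ha h2
    rw [eq_div_iff hp']
    linear_combination h3
  have ht0 : Tendsto (fun k => infLap n ψ (x k)) atTop (nhds 0) := by
    have hnum : Tendsto (fun k => -(‖gradient ψ (x k)‖ ^ (2:ℝ) * lap n ψ (x k)))
        atTop (nhds (-(‖gradient ψ x₀‖ ^ (2:ℝ) * lap n ψ x₀))) := by
      have hf : Continuous (fun y => ‖gradient ψ y‖ ^ (2:ℝ) * lap n ψ y) :=
        (hgc.norm.rpow_const (fun y => Or.inr (by norm_num))).mul hlc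
      exact (((hf.tendsto x₀).comp hx).neg)
    have hden : Tendsto (fun k => p k - 2) atTop atTop :=
      tendsto_atTop_add_const_right _ _ hp
    have := hnum.div_atTop hden
    simp only [key]
    exact this
  have ht1 : Tendsto (fun k => infLap n ψ (x k)) atTop (nhds (infLap n ψ x₀)) :=
    (hil.continuousAt.tendsto).comp hx
  exact tendsto_nhds_unique ht1 ht0
end

section
/- Let φ : ℝⁿ → ℝ and u : ℝⁿ → ℝ be continuous, let (u_k)_{k∈ℕ} be continuous functions converging to u locally uniformly on ℝⁿ, let (σ_k)_{k∈ℕ} be positive reals with σ_k → 0, and let M > 0. Suppose that for every ε > 0, every compact set K ⊂ ℝⁿ, and every k, the Lebesgue measure of {x ∈ K : u_k(x) − φ(x) < −ε} is at most M·σ_k/ε. Then u ≥ φ on all of ℝⁿ. -/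
open MeasureTheory Filter Metric

/-- if the sets where `u_k < φ − ε` have measure `O(σ_k)` on every
compact set, with `σ_k → 0`, then the locally uniform limit `u` lies above `φ`. -/
theorem limit_ge_obstacle
    (n : ℕ) (φ u : EuclideanSpace ℝ (Fin n) → ℝ)
    (hφ : Continuous φ) (hu : Continuous u)
    (uk : ℕ → EuclideanSpace ℝ (Fin n) → ℝ) (huk : ∀ k, Continuous (uk k))
    (hconv : TendstoLocallyUniformly uk u atTop)
    (σ : ℕ → ℝ) (hσpos : ∀ k, 0 < σ k) (hσ : Tendsto σ atTop (nhds 0))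
    (M : ℝ) (hM : 0 < M)
    (hmeas : ∀ ε > (0 : ℝ), ∀ K : Set (EuclideanSpace ℝ (Fin n)), IsCompact K → ∀ k,
      volume {x ∈ K | uk k x - φ x < -ε} ≤ ENNReal.ofReal (M * σ k / ε)) :
    ∀ x, φ x ≤ u x := by
  intro x
  by_contra hlt
  push_neg at hlt
  set ε : ℝ := (φ x - u x) / 3 with hε_def
  have hε : 0 < ε := by dsimp [ε]; linarith
  -- open set where u - φ < -2ε
  have hopen : IsOpen {y : EuclideanSpace ℝ (Fin n) | u y - φ y < -(2 * ε)} :=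
    isOpen_lt (hu.sub hφ) continuous_const
  have hxmem : x ∈ {y : EuclideanSpace ℝ (Fin n) | u y - φ y < -(2 * ε)} := by
    simp only [Set.mem_setOf_eq]; dsimp [ε]; linarith
  obtain ⟨r, hr, hball⟩ := Metric.isOpen_iff.mp hopen x hxmem
  set K : Set (EuclideanSpace ℝ (Fin n)) := closedBall x (r / 2) with hK_def
  have hKc : IsCompact K := isCompact_closedBall x _
  have hKsub : K ⊆ {y : EuclideanSpace ℝ (Fin n) | u y - φ y < -(2 * ε)} :=
    (closedBall_subset_ball (by linarith)).trans hball
  -- uniform convergence on K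
  have hunif : TendstoUniformlyOn uk u atTop K :=
    (tendstoLocallyUniformly_iff_forall_isCompact.mp hconv) K hKc
  have hev : ∀ᶠ k in atTop, ∀ y ∈ K, dist (u y) (uk k y) < ε :=
    (Metric.tendstoUniformlyOn_iff.mp hunif) ε hε
  -- eventually the measure bound is smaller than volume K
  have hKpos : 0 < volume K := measure_closedBall_pos volume x (by linarith)
  have htend : Tendsto (fun k => ENNReal.ofReal (M * σ k / ε)) atTop (nhds 0) := by
    have h1 : Tendsto (fun k => M * σ k / ε) atTop (nhds 0) := by
      have := (hσ.const_mul M).div_const ε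
      simpa using this
    have := ENNReal.tendsto_ofReal h1
    simpa using this
  have hev2 : ∀ᶠ k in atTop, ENNReal.ofReal (M * σ k / ε) < volume K :=
    htend.eventually_lt_const hKpos
  obtain ⟨k, hk1, hk2⟩ := (hev.and hev2).exists
  -- on K, uk k - φ < -ε everywhere
  have hset : K ⊆ {y ∈ K | uk k y - φ y < -ε} := by
    intro y hy
    refine ⟨hy, ?_⟩
    have h1 := hKsub hy
    simp only [Set.mem_setOf_eq] at h1
    have h2 := hk1 y hy
    rw [Real.dist_eq] at h2
    have := abs_lt.mp h2
    linarith [this.1, this.2]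
  have := (measure_mono hset).trans (hmeas ε hε K hKc k)
  exact absurd (this.trans_lt hk2) (lt_irrefl _)
end

section
/- Let (u_k)_{k∈ℕ} be continuous nonnegative functions on ℝⁿ converging uniformly on ℝⁿ to a continuous function u, and let θ_k → θ > 0 be positive reals. Assume every ∂{u_k>0} is nonempty, and that for each k the function u_k has linear growth away from the free boundary with constant θ_k and is strongly non-degenerate with constant θ_k. Then u has linear growth away from the free boundary with constant θ and is strongly non-degenerate with constant θ; that is, u(x) ≥ θ·dist(x, ∂{u>0}) for every x with u(x) > 0, and sup_{B_r(x₀)} u ≥ θ·r for every x₀ ∈ ∂{u>0} and every r > 0. -/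
open Metric MeasureTheory Filter

/-- A continuous nonnegative function vanishes on the frontier of its positivity set. -/
lemma frontier_pos_zero {E : Type*} [TopologicalSpace E] {v : E → ℝ}
    (hv : Continuous v) (hv0 : ∀ x, 0 ≤ v x) {z : E}
    (hz : z ∈ frontier {x | 0 < v x}) : v z = 0 := by
  have h1 : z ∈ closure ({x | 0 < v x}ᶜ) := by
    rw [frontier_eq_closure_inter_closure] at hz; exact hz.2
  have h3 : ({x | 0 < v x}ᶜ : Set E) = {x | v x ≤ 0} := by ext x; simp [not_lt]
  have h2 : IsClosed {x : E | v x ≤ 0} := isClosed_le hv continuous_const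
  rw [h3, h2.closure_eq] at h1
  exact le_antisymm h1 (hv0 z)

/-- The ball around a positivity point of radius at most the distance to the frontier
is contained in the positivity set. -/
lemma ball_subset_pos {E : Type*} [NormedAddCommGroup E] [NormedSpace ℝ E] {v : E → ℝ}
    (hv : Continuous v) {x : E} (hx : 0 < v x) {d : ℝ}
    (hd : d ≤ infDist x (frontier {y | 0 < v y})) :
    ball x d ⊆ {y | 0 < v y} := by
  set s : Set E := {y | 0 < v y} with hs
  have hso : IsOpen s := isOpen_lt continuous_const hv
  have hfb : ∀ w ∈ ball x d, w ∉ frontier s := by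
    intro w hw hwf
    have h1 : infDist x (frontier s) ≤ dist x w := infDist_le_dist_of_mem hwf
    have h2 : dist x w < d := by simpa [dist_comm] using hw
    linarith
  have hsub : ball x d ⊆ s ∪ (closure s)ᶜ := by
    intro w hw
    by_cases hws : w ∈ closure s
    · left
      by_contra hwn
      refine hfb w hw ?_
      rw [frontier_eq_closure_inter_closure]
      exact ⟨hws, subset_closure hwn⟩
    · right; exact hws
  have hpre : IsPreconnected (ball x d) := (convex_ball x d).isPreconnected
  by_contra hcon
  rw [Set.not_subset] at hcon
  obtain ⟨w, hw, hwn⟩ := hcon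
  have hwV : w ∈ (closure s)ᶜ := by
    rcases hsub hw with h | h
    · exact absurd h hwn
    · exact h
  have hd0 : 0 < d := by
    rcases le_or_gt d 0 with h | h
    · exact absurd hw (by simp [ball_eq_empty.2 h])
    · exact h
  have hxball : x ∈ ball x d := mem_ball_self hd0
  have := hpre s ((closure s)ᶜ) hso (isClosed_closure.isOpen_compl) hsub
    ⟨x, hxball, hx⟩ ⟨w, hw, hwV⟩
  obtain ⟨y, _, hy1, hy2⟩ := this
  exact hy2 (subset_closure hy1)

/-- linear growth and strong non-degeneracy pass to the uniform limit. -/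
theorem linear_growth_and_nondegeneracy_of_limit
    (n : ℕ) (u : EuclideanSpace ℝ (Fin n) → ℝ)
    (uk : ℕ → EuclideanSpace ℝ (Fin n) → ℝ)
    (hu : Continuous u) (huk : ∀ k, Continuous (uk k))
    (hu0 : ∀ x, 0 ≤ u x) (huk0 : ∀ k x, 0 ≤ uk k x)
    (hconv : TendstoUniformly uk u atTop)
    (θ : ℝ) (hθ : 0 < θ) (θk : ℕ → ℝ) (hθk : ∀ k, 0 < θk k)
    (hθconv : Tendsto θk atTop (nhds θ))
    (hfbk : ∀ k, (frontier {x | 0 < uk k x}).Nonempty)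
    (hlink : ∀ k x, 0 < uk k x → θk k * infDist x (frontier {y | 0 < uk k y}) ≤ uk k x)
    (hndk : ∀ k, ∀ x₀ ∈ frontier {y | 0 < uk k y}, ∀ r > (0 : ℝ),
      θk k * r ≤ sSup (uk k '' closedBall x₀ r)) :
    (∀ x, 0 < u x → θ * infDist x (frontier {y | 0 < u y}) ≤ u x) ∧
    (∀ x₀ ∈ frontier {y | 0 < u y}, ∀ r > (0 : ℝ),
      θ * r ≤ sSup (u '' closedBall x₀ r)) := by
  constructor
  · -- linear growth
    intro x hx
    set F : Set (EuclideanSpace ℝ (Fin n)) := frontier {y | 0 < u y} with hF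
    set d : ℝ := infDist x F with hd
    rcases le_or_gt d 0 with hd0 | hd0
    · have : θ * d ≤ 0 := mul_nonpos_of_nonneg_of_nonpos hθ.le hd0
      linarith [hu0 x, hx]
    -- d > 0
    refine le_of_forall_pos_le_add fun ε hε => ?_
    set ε₂ : ℝ := min (d / 2) (ε / θ) with hε₂
    have hε₂0 : 0 < ε₂ := lt_min (by linarith) (div_pos hε hθ)
    set ρ : ℝ := d - ε₂ with hρ
    have hρ0 : 0 < ρ := by
      have := min_le_left (d / 2) (ε / θ); simp only [hρ, hε₂]; linarith
    have hρd : ρ < d := by simp only [hρ]; linarith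
    -- closedBall x ρ ⊆ positivity set of u
    have hball : closedBall x ρ ⊆ {y | 0 < u y} := by
      refine (closedBall_subset_ball hρd).trans (ball_subset_pos hu hx ?_)
      exact le_of_eq hd.symm
    -- min of u on the compact ball is positive
    obtain ⟨w₀, hw₀, hmin⟩ := (isCompact_closedBall x ρ).exists_isMinOn
      (nonempty_closedBall.2 hρ0.le) hu.continuousOn
    set c : ℝ := u w₀ with hc
    have hc0 : 0 < c := hball hw₀
    -- eventually uk k > 0 on the ball, hence the k-frontier avoids the ball
    have hev : ∀ᶠ k in atTop, θk k * ρ ≤ uk k x := by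
      filter_upwards [Metric.tendstoUniformly_iff.1 hconv c hc0] with k hk
      have hpos : ∀ w ∈ closedBall x ρ, 0 < uk k w := by
        intro w hw
        have h1 : dist (u w) (uk k w) < c := hk w
        have h2 : c ≤ u w := hmin hw
        rw [Real.dist_eq] at h1
        have := abs_lt.1 h1
        linarith [this.1]
      have hsep : ρ ≤ infDist x (frontier {y | 0 < uk k y}) := by
        by_contra hcon
        push_neg at hcon
        obtain ⟨z, hz, hzd⟩ := (infDist_lt_iff (hfbk k)).1 hcon
        have hz0 : uk k z = 0 := frontier_pos_zero (huk k) (huk0 k) hz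
        have : z ∈ closedBall x ρ := by
          simpa [dist_comm] using hzd.le
        exact absurd hz0 (ne_of_gt (hpos z this))
      have hxpos : 0 < uk k x := hpos x (mem_closedBall_self hρ0.le)
      calc θk k * ρ ≤ θk k * infDist x (frontier {y | 0 < uk k y}) :=
            mul_le_mul_of_nonneg_left hsep (hθk k).le
        _ ≤ uk k x := hlink k x hxpos
    have hlim1 : Tendsto (fun k => θk k * ρ) atTop (nhds (θ * ρ)) := hθconv.mul_const ρ
    have hlim2 : Tendsto (fun k => uk k x) atTop (nhds (u x)) := hconv.tendsto_at x
    have hkey : θ * ρ ≤ u x := le_of_tendsto_of_tendsto hlim1 hlim2 hev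
    have h4 : θ * ε₂ ≤ ε := by
      have h5 : ε₂ ≤ ε / θ := min_le_right _ _
      calc θ * ε₂ ≤ θ * (ε / θ) := mul_le_mul_of_nonneg_left h5 hθ.le
        _ = ε := by field_simp
    have : θ * d = θ * ρ + θ * ε₂ := by rw [hρ]; ring
    linarith
  · -- strong non-degeneracy
    intro x₀ hx₀ r hr
    set S : ℝ := sSup (u '' closedBall x₀ r) with hS
    have hSbdd : BddAbove (u '' closedBall x₀ r) :=
      ((isCompact_closedBall x₀ r).image hu).bddAbove
    have hSle : ∀ w ∈ closedBall x₀ r, u w ≤ S := fun w hw =>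
      le_csSup hSbdd (Set.mem_image_of_mem u hw)
    -- key estimate for every small ε
    have hkey : ∀ ε : ℝ, 0 < ε → ε < r / 2 → θ * r ≤ S + ε * (1 + r + 2 * θ) := by
      intro ε hε hεr
      set δ : ℝ := ε * θ / 4 with hδ
      have hδ0 : 0 < δ := by positivity
      -- u x₀ = 0 and continuity: points near x₀ with small positive value
      have hux₀ : u x₀ = 0 := frontier_pos_zero hu hu0 hx₀
      obtain ⟨δ₀, hδ₀0, hδ₀⟩ := Metric.continuousAt_iff.1 hu.continuousAt (δ / 2) (by positivity)
      have hx₀cl : x₀ ∈ closure {y | 0 < u y} := by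
        rw [frontier_eq_closure_inter_closure] at hx₀; exact hx₀.1
      obtain ⟨y, hy0, hyd⟩ := Metric.mem_closure_iff.1 hx₀cl (min ε δ₀)
        (lt_min hε hδ₀0)
      have hyε : dist y x₀ < ε := by
        rw [dist_comm]; exact hyd.trans_le (min_le_left _ _)
      have hyδ : u y < δ / 2 := by
        have := hδ₀ (show dist y x₀ < δ₀ from (dist_comm x₀ y ▸ hyd).trans_le (min_le_right _ _))
        rw [hux₀, dist_zero_right, Real.norm_eq_abs, abs_lt] at this
        linarith [this.2]
      have hy0' : 0 < u y := hy0
      -- pick a large k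
      have hevθ : ∀ᶠ k in atTop, θ - min ε (θ / 2) < θk k :=
        hθconv.eventually (eventually_gt_nhds (by
          have : 0 < min ε (θ / 2) := lt_min hε (by linarith)
          linarith))
      set β : ℝ := min (u y) (min (δ / 2) ε) with hβ
      have hβ0 : 0 < β := lt_min hy0' (lt_min (by positivity) hε)
      obtain ⟨k, hkβ, hkθ⟩ :=
        ((Metric.tendstoUniformly_iff.1 hconv β hβ0).and hevθ).exists
      -- θk k > θ/2 and θk k > θ - ε
      have hθk2 : θ / 2 < θk k := by
        have h := min_le_right ε (θ / 2); linarith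
      have hθkε : θ - ε < θk k := by
        have h := min_le_left ε (θ / 2); linarith
      -- uk k y is positive and small
      have hky : dist (u y) (uk k y) < β := hkβ y
      have huky0 : 0 < uk k y := by
        have h1 := (abs_lt.1 (by rwa [Real.dist_eq] at hky)).2
        have h2 : β ≤ u y := min_le_left _ _
        linarith
      have hukyδ : uk k y < δ := by
        have h1 := (abs_lt.1 (by rwa [Real.dist_eq] at hky)).1
        have h2 : β ≤ δ / 2 := (min_le_right _ _).trans (min_le_left _ _)
        linarith
      -- distance from y to the k-frontier is small
      have hinf : infDist y (frontier {z | 0 < uk k z}) < ε := by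
        have h1 := hlink k y huky0
        have h2 : θk k * infDist y (frontier {z | 0 < uk k z}) < θk k * ε := by
          have : δ < θk k * ε := by
            simp only [hδ]
            nlinarith [mul_pos hε hθ]
          calc θk k * infDist y (frontier {z | 0 < uk k z}) ≤ uk k y := h1
            _ < δ := hukyδ
            _ < θk k * ε := this
        exact lt_of_mul_lt_mul_left h2 (hθk k).le
      obtain ⟨z, hz, hzd⟩ := (infDist_lt_iff (hfbk k)).1 hinf
      have hzx₀ : dist z x₀ < 2 * ε := by
        calc dist z x₀ ≤ dist z y + dist y x₀ := dist_triangle _ _ _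
          _ < ε + ε := add_lt_add (by rwa [dist_comm] at hzd) hyε
          _ = 2 * ε := by ring
      -- apply non-degeneracy of uk k at z with radius r - 2ε
      have hr2 : (0 : ℝ) < r - 2 * ε := by linarith
      have hnd := hndk k z hz (r - 2 * ε) hr2
      -- the small ball sits inside closedBall x₀ r
      have hsub : closedBall z (r - 2 * ε) ⊆ closedBall x₀ r := by
        intro w hw
        rw [mem_closedBall] at hw ⊢
        calc dist w x₀ ≤ dist w z + dist z x₀ := dist_triangle _ _ _
          _ ≤ (r - 2 * ε) + 2 * ε := add_le_add hw hzx₀.le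
          _ = r := by ring
      -- bound sSup of uk k image by S + ε
      have hbound : sSup (uk k '' closedBall z (r - 2 * ε)) ≤ S + ε := by
        apply csSup_le ((nonempty_closedBall.2 hr2.le).image _)
        rintro b ⟨w, hw, rfl⟩
        have h1 : dist (u w) (uk k w) < β := hkβ w
        have h2 := (abs_lt.1 (by rwa [Real.dist_eq] at h1)).1
        have h3 : β ≤ ε := (min_le_right _ _).trans (min_le_right _ _)
        have h4 : u w ≤ S := hSle w (hsub hw)
        linarith
      -- combine
      have hchain : (θ - ε) * (r - 2 * ε) ≤ S + ε := by
        calc (θ - ε) * (r - 2 * ε) ≤ θk k * (r - 2 * ε) :=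
              mul_le_mul_of_nonneg_right hθkε.le hr2.le
          _ ≤ sSup (uk k '' closedBall z (r - 2 * ε)) := hnd
          _ ≤ S + ε := hbound
      nlinarith
    -- pass to the limit ε → 0
    refine le_of_forall_pos_le_add fun ε' hε' => ?_
    have hC : (0 : ℝ) < 1 + r + 2 * θ := by linarith
    set ε : ℝ := min (r / 4) (ε' / (1 + r + 2 * θ)) with hε
    have hε0 : 0 < ε := lt_min (by linarith) (div_pos hε' hC)
    have hεr : ε < r / 2 := by
      have := min_le_left (r / 4) (ε' / (1 + r + 2 * θ)); simp only [hε]; linarith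
    have h1 := hkey ε hε0 hεr
    have h2 : ε * (1 + r + 2 * θ) ≤ ε' := by
      have h3 : ε ≤ ε' / (1 + r + 2 * θ) := min_le_right _ _
      calc ε * (1 + r + 2 * θ) ≤ (ε' / (1 + r + 2 * θ)) * (1 + r + 2 * θ) :=
            mul_le_mul_of_nonneg_right h3 hC.le
        _ = ε' := by field_simp
    linarith
end
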